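/- arXiv:0710.0268 — 6 statements merged into one kernel-verified Lean document; each statement's English description precedes it below -/
import Mathlib

section
/- Let {p_n}_{n\geq 0} be a polynomial sequence of binomial type. Then for each n \geq 0, the polynomial p_{n+1}(x) is divisible by x; defining p^*_n(x) = p_{n+1}(x)/x, the sequence satisfies p^*_n(x+y) = \sum_{k=0}^{n} \binom{n}{k} p_k(x) p^*_{n-k}(y) for all n \geq 0. -/
open Polynomial in
theorem additive_poly_eq {F : Type*} [Field F] [CharZero F] (g : Polynomial F)
    (h : ∀ x y : F, g.eval (x + y) = g.eval x + g.eval y) :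
    g = Polynomial.C (g.coeff 1) * Polynomial.X := by
  have h0 : g.eval 0 = 0 := by
    have h1 : g.eval 0 = g.eval 0 + g.eval 0 := by simpa using h 0 0
    exact left_eq_add.mp h1
  have hd : ∀ x : F, (derivative g).eval x = (derivative g).eval 0 := by
    intro x
    have hcomp : g.comp (X + C x) = g + C (g.eval x) := by
      apply Polynomial.funext
      intro r
      rw [eval_comp]
      simp only [eval_add, eval_X, eval_C]
      rw [add_comm r x, h x r]; ring
    have h2 := congrArg derivative hcomp
    rw [derivative_comp] at h2
    simp only [derivative_add, derivative_X, derivative_C, add_zero, mul_one] at h2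
    have h3 := congrArg (eval 0) h2
    simpa using h3
  set c := (derivative g).eval 0 with hc
  have hdc : derivative g = C c := by
    apply Polynomial.funext; intro r; simp [hd r]
  have hzero : derivative (g - C c * X) = 0 := by
    simp [hdc]
  have hgc : g - C c * X = C ((g - C c * X).coeff 0) :=
    eq_C_of_derivative_eq_zero hzero
  have hb : (g - C c * X).coeff 0 = 0 := by
    rw [coeff_zero_eq_eval_zero]
    simp [h0]
  have hg : g = C c * X := by
    have := hgc
    rw [hb] at this
    simpa [sub_eq_zero] using this
  have hcoef : g.coeff 1 = c := by rw [hg]; simp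
  rw [hcoef]; exact hg

open Polynomial

-- two-variable funext
theorem funext2 {F : Type*} [Field F] [Infinite F] {A B : Polynomial (Polynomial F)}
    (h : ∀ x y : F, Polynomial.eval x (Polynomial.eval (Polynomial.C y) A)
       = Polynomial.eval x (Polynomial.eval (Polynomial.C y) B)) : A = B := by
  have hy : ∀ y : F, Polynomial.eval (Polynomial.C y) A = Polynomial.eval (Polynomial.C y) B := by
    intro y
    exact Polynomial.funext (fun x => h x y)
  have : A - B = 0 := by
    apply Polynomial.eq_zero_of_infinite_isRoot
    apply Set.Infinite.mono (s := Set.range (Polynomial.C : F → Polynomial F))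
    · rintro _ ⟨y, rfl⟩
      simp [Polynomial.IsRoot, hy y]
    · exact Set.infinite_range_of_injective (Polynomial.C_injective)
  exact sub_eq_zero.mp this

open Polynomial Finset

theorem bt_p_zero {F : Type*} [Field F] (p : ℕ → Polynomial F)
    (hdeg : ∀ n, (p n).degree = n)
    (hbin : ∀ (n : ℕ) (x y : F), (p n).eval (x + y) =
      ∑ k ∈ Finset.range (n + 1), (n.choose k : F) * (p k).eval x * (p (n - k)).eval y) :
    p 0 = 1 := by
  have hC : p 0 = C ((p 0).coeff 0) := eq_C_of_degree_le_zero (by rw [hdeg 0]; rfl)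
  have hne : p 0 ≠ 0 := fun h => by simpa [h] using hdeg 0
  have h00 : (p 0).eval 0 = (p 0).eval 0 * (p 0).eval 0 := by
    have := hbin 0 0 0
    simpa using this
  -- h00 : eval 0 (p 0) = eval 0 (p 0) * eval 0 (p 0)
  have ha : (p 0).coeff 0 ≠ 0 := by
    intro h0
    apply hne
    rw [hC, h0, map_zero]
  have he : (p 0).coeff 0 = (p 0).eval 0 := (coeff_zero_eq_eval_zero _)
  have : (p 0).eval 0 = 1 := by
    have hne' : (p 0).eval 0 ≠ 0 := by rwa [← he]
    have h1 : (p 0).eval 0 * 1 = (p 0).eval 0 * (p 0).eval 0 := by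
      rw [mul_one]; exact h00
    exact (mul_left_cancel₀ hne' h1).symm
  rw [hC, he, this, map_one]

theorem bt_eval_zero {F : Type*} [Field F] (p : ℕ → Polynomial F)
    (hdeg : ∀ n, (p n).degree = n)
    (hbin : ∀ (n : ℕ) (x y : F), (p n).eval (x + y) =
      ∑ k ∈ Finset.range (n + 1), (n.choose k : F) * (p k).eval x * (p (n - k)).eval y) :
    ∀ n : ℕ, 1 ≤ n → (p n).eval 0 = 0 := by
  have hp0 : p 0 = 1 := bt_p_zero p hdeg hbin
  intro n
  induction n using Nat.strong_induction_on with
  | _ n ih =>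
    intro hn
    obtain ⟨m, rfl⟩ : ∃ m, n = m + 1 := ⟨n - 1, by omega⟩
    have h := hbin (m + 1) 0 0
    rw [add_zero] at h
    rw [Finset.sum_range_succ, Finset.sum_range_succ'] at h
    have hmid : ∑ k ∈ Finset.range m, ((m+1).choose (k+1) : F) * (p (k+1)).eval 0 *
        (p (m + 1 - (k+1))).eval 0 = 0 := by
      apply Finset.sum_eq_zero
      intro k hk
      rw [Finset.mem_range] at hk
      rw [ih (k+1) (by omega) (by omega)]
      ring
    rw [hmid] at h
    simp [hp0, Nat.sub_self] at h
    exact h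

open Polynomial Finset Nat

noncomputable def evSeries (F : Type*) [Field F] {T : Type*} [CommRing T] [Algebra F T]
    (u : ℕ → Polynomial F) (v : T) : PowerSeries T :=
  PowerSeries.mk fun n => algebraMap F T (n ! : F)⁻¹ * Polynomial.aeval v (u n)

theorem coeff_evSeries {F : Type*} [Field F] {T : Type*} [CommRing T] [Algebra F T]
    (u : ℕ → Polynomial F) (v : T) (n : ℕ) :
    PowerSeries.coeff n (evSeries F u v) = algebraMap F T (n ! : F)⁻¹ * Polynomial.aeval v (u n) :=
  PowerSeries.coeff_mk _ _

theorem map_evSeries {F : Type*} [Field F] {T T' : Type*} [CommRing T] [Algebra F T]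
    [CommRing T'] [Algebra F T'] (ψ : T →ₐ[F] T') (u : ℕ → Polynomial F) (v : T) :
    PowerSeries.map ψ.toRingHom (evSeries F u v) = evSeries F u (ψ v) := by
  apply PowerSeries.ext
  intro n
  rw [PowerSeries.coeff_map, coeff_evSeries, coeff_evSeries]
  show ψ (_ * _) = _
  rw [map_mul, Polynomial.aeval_algHom_apply, AlgHom.commutes]

theorem factorial_inv_conv {F : Type*} [Field F] [CharZero F] {T : Type*} [CommRing T]
    [Algebra F T] (a b : ℕ → T) (n : ℕ) :
    ∑ k ∈ Finset.range (n+1),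
      (algebraMap F T (k ! : F)⁻¹ * a k) * (algebraMap F T ((n-k) ! : F)⁻¹ * b (n-k)) =
      algebraMap F T (n ! : F)⁻¹ *
        ∑ k ∈ Finset.range (n+1), algebraMap F T (n.choose k : F) * (a k * b (n-k)) := by
  rw [Finset.mul_sum]
  apply Finset.sum_congr rfl
  intro k hk
  rw [Finset.mem_range] at hk
  have hkn : k ≤ n := by omega
  have h1 : (k ! : F) ≠ 0 := Nat.cast_ne_zero.mpr (Nat.factorial_ne_zero k)
  have h2 : ((n-k) ! : F) ≠ 0 := Nat.cast_ne_zero.mpr (Nat.factorial_ne_zero (n-k))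
  have h3 : (n ! : F) ≠ 0 := Nat.cast_ne_zero.mpr (Nat.factorial_ne_zero n)
  have hcast : (n.choose k : F) * (k ! : F) * ((n-k)! : F) = (n ! : F) := by
    exact_mod_cast congrArg (Nat.cast : ℕ → F) (Nat.choose_mul_factorial_mul_factorial hkn)
  have hs : (k ! : F)⁻¹ * ((n-k) ! : F)⁻¹ = (n ! : F)⁻¹ * (n.choose k : F) := by
    field_simp
    linear_combination -hcast
  calc (algebraMap F T (k ! : F)⁻¹ * a k) * (algebraMap F T ((n-k) ! : F)⁻¹ * b (n-k))
      = algebraMap F T ((k ! : F)⁻¹ * ((n-k) ! : F)⁻¹) * (a k * b (n-k)) := by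
        rw [map_mul]; ring
    _ = algebraMap F T ((n ! : F)⁻¹ * (n.choose k : F)) * (a k * b (n-k)) := by rw [hs]
    _ = algebraMap F T (n ! : F)⁻¹ * (algebraMap F T (n.choose k : F) * (a k * b (n-k))) := by
        rw [map_mul]; ring
open Polynomial Finset Nat

-- the evaluation ring hom S = (F[X])[Y] → F at (x, y)
noncomputable def evxy {F : Type*} [Field F] (x y : F) :
    Polynomial (Polynomial F) →+* F :=
  (Polynomial.evalRingHom x).comp (Polynomial.evalRingHom (Polynomial.C y))

theorem evxy_aeval {F : Type*} [Field F] (x y : F) (v : Polynomial (Polynomial F))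
    (f : Polynomial F) :
    evxy x y (Polynomial.aeval v f) = Polynomial.eval (evxy x y v) f := by
  rw [Polynomial.aeval_def, Polynomial.hom_eval₂]
  have hc : (evxy x y).comp (algebraMap F (Polynomial (Polynomial F))) = RingHom.id F := by
    ext a
    simp [evxy]
  rw [hc]
  rw [Polynomial.eval]

theorem evxy_algebraMap {F : Type*} [Field F] (x y : F) (c : F) :
    evxy x y (algebraMap F (Polynomial (Polynomial F)) c) = c := by
  simp [evxy]

theorem evxy_XS {F : Type*} [Field F] (x y : F) :
    evxy x y (Polynomial.C Polynomial.X) = x := by simp [evxy]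

theorem evxy_YS {F : Type*} [Field F] (x y : F) :
    evxy x y (Polynomial.X) = y := by simp [evxy]
open Polynomial Finset Nat

section Main
variable {F : Type*} [Field F] [CharZero F] (p : ℕ → Polynomial F)
  (hdeg : ∀ n, (p n).degree = n)
  (hbin : ∀ (n : ℕ) (x y : F), (p n).eval (x + y) =
      ∑ k ∈ Finset.range (n + 1), (n.choose k : F) * (p k).eval x * (p (n - k)).eval y)

theorem funext2' {A B : Polynomial (Polynomial F)}
    (h : ∀ x y : F, evxy x y A = evxy x y B) : A = B := by
  apply funext2
  intro x y
  exact h x y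

include hbin in
theorem hbinS : ∀ n : ℕ,
    Polynomial.aeval (Polynomial.C Polynomial.X + Polynomial.X : Polynomial (Polynomial F)) (p n)
      = ∑ k ∈ Finset.range (n+1), algebraMap F (Polynomial (Polynomial F)) (n.choose k : F) *
        (Polynomial.aeval (Polynomial.C Polynomial.X : Polynomial (Polynomial F)) (p k) *
         Polynomial.aeval (Polynomial.X : Polynomial (Polynomial F)) (p (n-k))) := by
  intro n
  apply funext2'
  intro x y
  rw [evxy_aeval, map_sum]
  rw [map_add, evxy_XS, evxy_YS, hbin n x y]
  apply Finset.sum_congr rfl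
  intro k _
  rw [map_mul, map_mul, evxy_algebraMap, evxy_aeval, evxy_aeval, evxy_XS, evxy_YS]
  ring

include hdeg hbin in
theorem antipode : ∀ n : ℕ,
    ∑ k ∈ Finset.range (n+1), algebraMap F (Polynomial F) (n.choose k : F) *
      (p k * (p (n-k)).comp (-Polynomial.X)) =
      if n = 0 then 1 else 0 := by
  intro n
  apply Polynomial.funext
  intro r
  have hev : ∀ (m : ℕ) (r : F), ((p m).comp (-Polynomial.X)).eval r = (p m).eval (-r) := by
    intro m r
    rw [Polynomial.eval_comp]
    simp
  rw [Polynomial.eval_finset_sum]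
  have : ∑ k ∈ Finset.range (n+1),
      (algebraMap F (Polynomial F) (n.choose k : F) * (p k * (p (n-k)).comp (-Polynomial.X))).eval r
      = ∑ k ∈ Finset.range (n+1), (n.choose k : F) * (p k).eval r * (p (n-k)).eval (-r) := by
    apply Finset.sum_congr rfl
    intro k _
    rw [Polynomial.algebraMap_eq, Polynomial.eval_mul, Polynomial.eval_mul, Polynomial.eval_C, hev]
    ring
  rw [this, ← hbin n r (-r)]
  rcases eq_or_ne n 0 with h0 | h0
  · subst h0
    simp [bt_p_zero p hdeg hbin]
  · rw [if_neg h0]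
    simp only [add_neg_cancel]
    rw [bt_eval_zero p hdeg hbin n (by omega)]
    simp

end Main
open Polynomial Finset Nat PowerSeries

section Main
variable {F : Type*} [Field F] [CharZero F] (p q : ℕ → Polynomial F)
  (hdeg : ∀ n, (p n).degree = n)
  (hbin : ∀ (n : ℕ) (x y : F), (p n).eval (x + y) =
      ∑ k ∈ Finset.range (n + 1), (n.choose k : F) * (p k).eval x * (p (n - k)).eval y)
  (hq : ∀ n : ℕ, p (n + 1) = Polynomial.X * q n)

include hq in
theorem seriesDE {T : Type*} [CommRing T] [Algebra F T] (v : T) :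
    PowerSeries.derivative T (evSeries F p v) = PowerSeries.C v * evSeries F q v := by
  apply PowerSeries.ext
  intro n
  rw [PowerSeries.coeff_derivative, coeff_evSeries, PowerSeries.coeff_C_mul, coeff_evSeries]
  rw [hq n, map_mul, Polynomial.aeval_X]
  have h3 : ((n)! : F) ≠ 0 := Nat.cast_ne_zero.mpr (Nat.factorial_ne_zero _)
  have h4 : ((n:F)+1) ≠ 0 := Nat.cast_add_one_ne_zero n
  have h5 : ((n+1)! : F) = ((n:F)+1) * (n ! : F) := by rw [Nat.factorial_succ]; push_cast; ring
  have h6 : ((n+1)! : F)⁻¹ * ((n:F)+1) = ((n)! : F)⁻¹ := by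
    rw [h5, mul_inv]
    field_simp
  have h7 : ((n:T)+1) = algebraMap F T ((n:F)+1) := by push_cast; ring
  calc algebraMap F T ((n+1)! : F)⁻¹ * (v * Polynomial.aeval v (q n)) * ((n:T)+1)
      = algebraMap F T (((n+1)! : F)⁻¹ * ((n:F)+1)) * (v * Polynomial.aeval v (q n)) := by
        rw [map_mul, h7]; ring
    _ = v * (algebraMap F T ((n)! : F)⁻¹ * Polynomial.aeval v (q n)) := by rw [h6]; ring

include hdeg hbin in
theorem Eneg_mul_univ :
    evSeries F p (Polynomial.X : Polynomial F) * evSeries F p (-Polynomial.X) = 1 := by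
  apply PowerSeries.ext
  intro n
  rw [PowerSeries.coeff_mul, Finset.Nat.sum_antidiagonal_eq_sum_range_succ_mk]
  have hc : ∀ k ∈ Finset.range (n+1),
      PowerSeries.coeff k (evSeries F p (Polynomial.X : Polynomial F)) *
      PowerSeries.coeff (n-k) (evSeries F p (-Polynomial.X)) =
      (algebraMap F (Polynomial F) ((k)! : F)⁻¹ * (p k)) *
      (algebraMap F (Polynomial F) (((n-k))! : F)⁻¹ * ((p (n-k)).comp (-Polynomial.X))) := by
    intro k _
    rw [coeff_evSeries, coeff_evSeries, Polynomial.aeval_X_left_apply, ← Polynomial.comp_eq_aeval]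
  rw [Finset.sum_congr rfl hc,
    factorial_inv_conv (fun k => p k) (fun m => (p m).comp (-Polynomial.X)) n,
    antipode p hdeg hbin n]
  rcases eq_or_ne n 0 with h0 | h0
  · subst h0; simp
  · rw [if_neg h0, PowerSeries.coeff_one, if_neg h0, mul_zero]

include hdeg hbin in
theorem Eneg_mul {T : Type*} [CommRing T] [Algebra F T] (v : T) :
    evSeries F p v * evSeries F p (-v) = 1 := by
  have h := congrArg (PowerSeries.map (Polynomial.aeval v : Polynomial F →ₐ[F] T).toRingHom)
    (Eneg_mul_univ p hdeg hbin)
  rw [map_mul, map_one, map_evSeries, map_evSeries] at h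
  simpa using h

include hbin in
theorem Emul :
    evSeries F p (Polynomial.C Polynomial.X + Polynomial.X : Polynomial (Polynomial F)) =
    evSeries F p (Polynomial.C Polynomial.X : Polynomial (Polynomial F)) *
    evSeries F p (Polynomial.X : Polynomial (Polynomial F)) := by
  apply PowerSeries.ext
  intro n
  rw [PowerSeries.coeff_mul, Finset.Nat.sum_antidiagonal_eq_sum_range_succ_mk]
  have hc : ∀ k ∈ Finset.range (n+1),
      PowerSeries.coeff k (evSeries F p (Polynomial.C Polynomial.X : Polynomial (Polynomial F))) *
      PowerSeries.coeff (n-k) (evSeries F p (Polynomial.X : Polynomial (Polynomial F))) =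
      (algebraMap F (Polynomial (Polynomial F)) ((k)! : F)⁻¹ *
        (Polynomial.aeval (Polynomial.C Polynomial.X : Polynomial (Polynomial F)) (p k))) *
      (algebraMap F (Polynomial (Polynomial F)) (((n-k))! : F)⁻¹ *
        (Polynomial.aeval (Polynomial.X : Polynomial (Polynomial F)) (p (n-k)))) := by
    intro k _
    rw [coeff_evSeries, coeff_evSeries]
  rw [Finset.sum_congr rfl hc,
    factorial_inv_conv (fun k => Polynomial.aeval (Polynomial.C Polynomial.X : Polynomial (Polynomial F)) (p k))
      (fun m => Polynomial.aeval (Polynomial.X : Polynomial (Polynomial F)) (p m)) n,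
    coeff_evSeries, hbinS p hbin n]

end Main

theorem psDerivMul {T : Type*} [CommRing T] (f g : PowerSeries T) :
    PowerSeries.derivative T (f * g) =
      f * PowerSeries.derivative T g + g * PowerSeries.derivative T f := by
  show PowerSeries.derivativeFun (f * g) = _
  rw [PowerSeries.derivativeFun_mul]
  rfl
open Polynomial Finset Nat PowerSeries

section Main2
variable {F : Type*} [Field F] [CharZero F] (p q : ℕ → Polynomial F)
  (hdeg : ∀ n, (p n).degree = n)
  (hbin : ∀ (n : ℕ) (x y : F), (p n).eval (x + y) =
      ∑ k ∈ Finset.range (n + 1), (n.choose k : F) * (p k).eval x * (p (n - k)).eval y)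
  (hq : ∀ n : ℕ, p (n + 1) = Polynomial.X * q n)

include hdeg hbin hq in
set_option maxHeartbeats 1000000 in
theorem bt_qstar : ∀ (n : ℕ) (x y : F), (q n).eval (x + y) =
    ∑ k ∈ Finset.range (n + 1), (n.choose k : F) * (p k).eval x * (q (n - k)).eval y := by
  set XS : Polynomial (Polynomial F) := Polynomial.C Polynomial.X with hXS
  set YS : Polynomial (Polynomial F) := Polynomial.X with hYS
  set A := evSeries F p XS with hA
  set B := evSeries F p YS with hB
  set A' := evSeries F p (-XS) with hA'
  set B' := evSeries F p (-YS) with hB'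
  set S' := evSeries F p (-(XS + YS)) with hS'
  set u1 := evSeries F q XS with hu1
  set u2 := evSeries F q YS with hu2
  set us := evSeries F q (XS + YS) with hus
  have hAA' : A * A' = 1 := Eneg_mul p hdeg hbin XS
  have hBB' : B * B' = 1 := Eneg_mul p hdeg hbin YS
  have hSS' : evSeries F p (XS + YS) * S' = 1 := Eneg_mul p hdeg hbin (XS + YS)
  have hE : evSeries F p (XS + YS) = A * B := Emul p hbin
  have hABS' : A * B * S' = 1 := by rw [← hE]; exact hSS'
  -- KEY identity via derivative
  have key : PowerSeries.C (XS + YS) * us = A * (PowerSeries.C YS * u2)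
      + B * (PowerSeries.C XS * u1) := by
    have h1 : PowerSeries.C (XS + YS) * us
        = PowerSeries.derivative (Polynomial (Polynomial F)) (A * B) := by
      rw [← seriesDE p q hq (XS + YS), hE]
    rw [psDerivMul, seriesDE p q hq XS, seriesDE p q hq YS] at h1
    linear_combination h1
  -- the universal W series and its images
  set W : PowerSeries (Polynomial F) :=
    evSeries F q Polynomial.X * evSeries F p (-Polynomial.X) with hW
  have hmapW : ∀ v : Polynomial (Polynomial F), PowerSeries.map (Polynomial.aeval v : Polynomial F →ₐ[F] Polynomial (Polynomial F)).toRingHom W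
      = evSeries F q v * evSeries F p (-v) := by
    intro v
    rw [hW, map_mul, map_evSeries, map_evSeries, Polynomial.aeval_X, map_neg,
      Polynomial.aeval_X]
  -- identity (‡)
  have hdagger : (PowerSeries.C XS
        + PowerSeries.C YS) * (us * S') =
      PowerSeries.C XS * (u1 * A') + PowerSeries.C YS * (u2 * B') := by
    rw [map_add] at key
    linear_combination S' * key
      + (PowerSeries.C XS * u1 * A' + PowerSeries.C YS * u2 * B') * hABS'
      - (PowerSeries.C XS * u1 * S' * B) * hAA'
      - (PowerSeries.C YS * u2 * S' * A) * hBB'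
  -- coefficients of W are constants
  have hWconst : ∀ n : ℕ, ∃ c : F, PowerSeries.coeff n W = Polynomial.C c := by
    intro n
    set w := PowerSeries.coeff n W with hw
    have hcoeff := congrArg (PowerSeries.coeff n) hdagger
    rw [← hmapW (XS + YS), ← hmapW XS, ← hmapW YS] at hcoeff
    simp only [add_mul, map_add, PowerSeries.coeff_C_mul, PowerSeries.coeff_map] at hcoeff
    set g : Polynomial F := Polynomial.X * w with hg
    have hg1 : ∀ v : Polynomial (Polynomial F), Polynomial.aeval v g = v * Polynomial.aeval v w := by
      intro v; rw [hg, map_mul, Polynomial.aeval_X]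
    have hAdd : Polynomial.aeval (XS + YS) g = Polynomial.aeval XS g + Polynomial.aeval YS g := by
      rw [hg1, hg1, hg1]
      linear_combination hcoeff
    have hptwise : ∀ x y : F, g.eval (x + y) = g.eval x + g.eval y := by
      intro x y
      have h2 := congrArg (evxy x y) hAdd
      rw [map_add, evxy_aeval, evxy_aeval, evxy_aeval, map_add, evxy_XS, evxy_YS] at h2
      exact h2
    have hlin := additive_poly_eq g hptwise
    refine ⟨g.coeff 1, ?_⟩
    have hx : (Polynomial.X : Polynomial F) ≠ 0 := Polynomial.X_ne_zero
    apply mul_left_cancel₀ hx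
    calc Polynomial.X * w = g := hg.symm
      _ = Polynomial.C (g.coeff 1) * Polynomial.X := hlin
      _ = Polynomial.X * Polynomial.C (g.coeff 1) := by ring
  -- Φx W = Φy W
  have hXYW : u1 * A' = u2 * B' := by
    rw [← hmapW XS, ← hmapW YS]
    apply PowerSeries.ext
    intro n
    obtain ⟨c, hc⟩ := hWconst n
    rw [PowerSeries.coeff_map, PowerSeries.coeff_map, hc]
    show Polynomial.aeval XS (Polynomial.C c) = Polynomial.aeval YS (Polynomial.C c)
    rw [Polynomial.aeval_C, Polynomial.aeval_C]
  have hsym : u1 * B = u2 * A := by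
    linear_combination (A * B) * hXYW - (u1 * B) * hAA' + (u2 * A) * hBB'
  -- conclude the series identity
  have hsne : XS + YS ≠ 0 := by
    intro h
    have h1 : (XS + YS).coeff 1 = 1 := by
      rw [hXS, hYS]
      simp
    rw [h] at h1
    simp at h1
  have hmul : PowerSeries.C (XS + YS) * us
      = PowerSeries.C (XS + YS) * (A * u2) := by
    rw [key, map_add]
    linear_combination PowerSeries.C XS * hsym
  -- extract coefficients
  intro n x y
  have hco0 := congrArg (PowerSeries.coeff n) hmul
  rw [PowerSeries.coeff_C_mul, PowerSeries.coeff_C_mul] at hco0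
  have hco := mul_left_cancel₀ hsne hco0
  rw [coeff_evSeries] at hco
  rw [PowerSeries.coeff_mul, Finset.Nat.sum_antidiagonal_eq_sum_range_succ_mk] at hco
  have hc : ∀ k ∈ Finset.range (n+1),
      PowerSeries.coeff k A * PowerSeries.coeff (n-k) u2 =
      (algebraMap F (Polynomial (Polynomial F)) ((k)! : F)⁻¹ * (Polynomial.aeval XS (p k))) *
      (algebraMap F (Polynomial (Polynomial F)) (((n-k))! : F)⁻¹ * (Polynomial.aeval YS (q (n-k)))) := by
    intro k _
    rw [hA, hu2, coeff_evSeries, coeff_evSeries]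
  rw [Finset.sum_congr rfl hc,
    factorial_inv_conv (fun k => Polynomial.aeval XS (p k))
      (fun m => Polynomial.aeval YS (q m)) n] at hco
  have halgne : algebraMap F (Polynomial (Polynomial F)) ((n)! : F)⁻¹ ≠ 0 := by
    have hne : ((n)! : F)⁻¹ ≠ 0 := by
      apply inv_ne_zero
      exact Nat.cast_ne_zero.mpr (Nat.factorial_ne_zero n)
    intro h
    exact hne ((map_eq_zero_iff (algebraMap F (Polynomial (Polynomial F)))
      (FaithfulSMul.algebraMap_injective F (Polynomial (Polynomial F)))).mp h)
  have hSid := mul_left_cancel₀ halgne hco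
  have h3 := congrArg (evxy x y) hSid
  rw [evxy_aeval, map_add, evxy_XS, evxy_YS, map_sum] at h3
  rw [h3]
  apply Finset.sum_congr rfl
  intro k _
  rw [map_mul, map_mul, evxy_algebraMap, evxy_aeval, evxy_aeval, evxy_XS, evxy_YS]
  ring

end Main2

theorem binomial_type_pstar {F : Type*} [Field F] [CharZero F] (p : ℕ → Polynomial F)
    (hdeg : ∀ n, (p n).degree = n)
    (hbin : ∀ (n : ℕ) (x y : F), (p n).eval (x + y) =
      ∑ k ∈ Finset.range (n + 1), (n.choose k : F) * (p k).eval x * (p (n - k)).eval y) :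
    (∀ n : ℕ, Polynomial.X ∣ p (n + 1)) ∧
      ∀ q : ℕ → Polynomial F, (∀ n : ℕ, p (n + 1) = Polynomial.X * q n) →
        ∀ (n : ℕ) (x y : F), (q n).eval (x + y) =
          ∑ k ∈ Finset.range (n + 1),
            (n.choose k : F) * (p k).eval x * (q (n - k)).eval y := by
  constructor
  · intro n
    rw [Polynomial.X_dvd_iff, Polynomial.coeff_zero_eq_eval_zero]
    exact bt_eval_zero p hdeg hbin (n+1) (by omega)
  · intro q hq
    exact bt_qstar p q hdeg hbin hq
end

section
/- Let p^*_0, ..., p^*_{N-M-1} be monic polynomials with deg p^*_k = k, N > M. For x_1,...,x_M, y_1,...,y_N in a field with all x_i + y_j nonzero, the N \times N determinant whose first N-M rows are (p^*_{N-M-i}(y_j))_j (for i = 1,...,N-M) and whose last M rows are (1/(x_i + y_j))_j (for i = 1,...,M) equals \prod_{i<j \leq M}(x_i - x_j) \cdot \prod_{i<j \leq N}(y_i - y_j) / \prod_{1\leq i \leq M, 1 \leq j \leq N}(x_i + y_j). -/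
open Finset Polynomial Matrix

lemma det_rev_vandermonde {F : Type*} [CommRing F] {n : ℕ} (v : Fin n → F) :
    (Matrix.of fun i j : Fin n => v j ^ (n - 1 - (i : ℕ))).det =
      ∏ i : Fin n, ∏ j ∈ Finset.Ioi i, (v i - v j) := by
  have hM : (Matrix.of fun i j : Fin n => v j ^ (n - 1 - (i : ℕ)))
      = ((Matrix.vandermonde (v ∘ Fin.rev))ᵀ).submatrix Fin.revPerm Fin.revPerm := by
    ext i j
    simp [Matrix.vandermonde, Fin.val_rev]
    congr 1
    omega
  rw [hM, Matrix.det_submatrix_equiv_self, Matrix.det_transpose, Matrix.det_vandermonde]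
  rw [Finset.prod_sigma', Finset.prod_sigma']
  refine Finset.prod_nbij' (fun p => ⟨Fin.rev p.2, Fin.rev p.1⟩)
    (fun p => ⟨Fin.rev p.2, Fin.rev p.1⟩) ?_ ?_ ?_ ?_ ?_
  · intro a ha
    simp only [Finset.mem_sigma, Finset.mem_univ, Finset.mem_Ioi, true_and] at ha ⊢
    exact Fin.rev_lt_rev.mpr ha
  · intro a ha
    simp only [Finset.mem_sigma, Finset.mem_univ, Finset.mem_Ioi, true_and] at ha ⊢
    exact Fin.rev_lt_rev.mpr ha
  · intro a _; simp
  · intro a _; simp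
  · intro a _; simp

lemma prod_erase_split {F : Type*} [CommRing F] {n : ℕ} (x : Fin n → F) :
    (∏ i : Fin n, ∏ j ∈ Finset.univ.erase i, (x j - x i)) =
      (∏ i : Fin n, ∏ j ∈ Finset.Ioi i, (x j - x i)) *
        (∏ i : Fin n, ∏ j ∈ Finset.Ioi i, (x i - x j)) := by
  have h1 : ∀ i : Fin n, (Finset.univ.erase i) = Finset.Ioi i ∪ Finset.Iio i := by
    intro i; ext j
    simp only [Finset.mem_erase, Finset.mem_union, Finset.mem_Ioi, Finset.mem_Iio,
      Finset.mem_univ, and_true]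
    constructor
    · intro hne; rcases lt_or_gt_of_ne hne with h | h
      · exact Or.inr h
      · exact Or.inl h
    · rintro (h | h)
      · exact ne_of_gt h
      · exact ne_of_lt h
  have h2 : ∀ i : Fin n, ∏ j ∈ Finset.univ.erase i, (x j - x i)
      = (∏ j ∈ Finset.Ioi i, (x j - x i)) * ∏ j ∈ Finset.Iio i, (x j - x i) := by
    intro i
    rw [h1 i, Finset.prod_union]
    rw [Finset.disjoint_left]
    intro a ha hb
    simp only [Finset.mem_Ioi, Finset.mem_Iio] at ha hb
    exact absurd (ha.trans hb) (lt_irrefl _)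
  rw [Finset.prod_congr rfl fun i _ => h2 i, Finset.prod_mul_distrib]
  congr 1
  rw [Finset.prod_sigma', Finset.prod_sigma']
  refine Finset.prod_nbij' (fun p => ⟨p.2, p.1⟩) (fun p => ⟨p.2, p.1⟩) ?_ ?_ ?_ ?_ ?_ <;>
    intro a ha <;>
    simp only [Finset.mem_sigma, Finset.mem_univ, Finset.mem_Ioi, Finset.mem_Iio, true_and] at *
  · exact ha
  · exact ha

lemma bordered_core {F : Type*} [Field F] (M N : ℕ) (hMN : M < N)
    (x : Fin M → F) (y : Fin N → F) (h : ∀ i j, x i + y j ≠ 0)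
    (hx : Function.Injective x) :
    (Matrix.of fun i j : Fin N =>
        if hi : (i : ℕ) < N - M then y j ^ (N - M - 1 - (i : ℕ))
        else (x ⟨(i : ℕ) - (N - M), Nat.sub_lt_left_of_lt_add (Nat.le_of_not_lt hi) (i.isLt.trans_eq (Nat.sub_add_cancel hMN.le).symm)⟩ + y j)⁻¹).det =
      ((∏ i : Fin M, ∏ j ∈ Finset.Ioi i, (x i - x j)) *
          ∏ i : Fin N, ∏ j ∈ Finset.Ioi i, (y i - y j)) /
        ∏ i : Fin M, ∏ j : Fin N, (x i + y j) := by
  set B : Matrix (Fin N) (Fin N) F := Matrix.of fun i j : Fin N =>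
        if hi : (i : ℕ) < N - M then y j ^ (N - M - 1 - (i : ℕ))
        else (x ⟨(i : ℕ) - (N - M), Nat.sub_lt_left_of_lt_add (Nat.le_of_not_lt hi) (i.isLt.trans_eq (Nat.sub_add_cancel hMN.le).symm)⟩ + y j)⁻¹ with hB
  -- the index into x for the Cauchy rows
  have xlt : ∀ (i : Fin N), ¬((i : ℕ) < N - M) → (i : ℕ) - (N - M) < M := by
    intro i hi; have := i.isLt; omega
  set xind : ∀ (i : Fin N), ¬((i : ℕ) < N - M) → Fin M :=
    fun i hi => ⟨(i : ℕ) - (N - M), xlt i hi⟩ with hxind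
  set e : F[X] := ∏ i' : Fin M, (X + C (x i')) with he
  set r : Fin M → F[X] := fun a => ∏ i' ∈ Finset.univ.erase a, (X + C (x i')) with hr
  set f : Fin N → F[X] := fun i =>
    if hi : (i : ℕ) < N - M then X ^ (N - M - 1 - (i : ℕ)) * e else r (xind i hi) with hf
  have he_monic : e.Monic := monic_prod_of_monic _ _ fun i _ => monic_X_add_C _
  have he_deg : e.natDegree = M := by
    rw [he, natDegree_prod]
    · simp
    · intro i _; exact (monic_X_add_C _).ne_zero
  have hr_monic : ∀ a, (r a).Monic := fun a =>
    monic_prod_of_monic _ _ fun i _ => monic_X_add_C _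
  have hr_deg : ∀ a, (r a).natDegree = M - 1 := by
    intro a
    rw [hr, natDegree_prod]
    · simp [Finset.card_erase_of_mem]
    · intro i _; exact (monic_X_add_C _).ne_zero
  have hf_monic : ∀ i, (f i).Monic := by
    intro i; rw [hf]; dsimp only
    split
    · exact (monic_X_pow _).mul he_monic
    · exact hr_monic _
  have hf_deg : ∀ i : Fin N, (f i).natDegree =
      if (i : ℕ) < N - M then N - 1 - (i : ℕ) else M - 1 := by
    intro i; rw [hf]; dsimp only
    split_ifs with hi
    · rw [(monic_X_pow _).natDegree_mul he_monic, natDegree_X_pow, he_deg]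
      omega
    · exact hr_deg _
  have hf_deg_lt : ∀ i : Fin N, (f i).natDegree < N := by
    intro i; rw [hf_deg i]; split <;> omega
  set G : Matrix (Fin N) (Fin N) F := Matrix.of fun i j : Fin N => (f i).eval (y j) with hG
  set D : Matrix (Fin N) (Fin N) F :=
    Matrix.diagonal fun j : Fin N => ∏ i' : Fin M, (x i' + y j) with hD
  set c' : Matrix (Fin N) (Fin N) F :=
    Matrix.of fun i n : Fin N => (f i).coeff (N - 1 - (n : ℕ)) with hc'
  set W : Matrix (Fin N) (Fin N) F :=
    Matrix.of fun n j : Fin N => y j ^ (N - 1 - (n : ℕ)) with hW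
  -- Step 1 : G = B * D
  have step1 : G = B * D := by
    ext i j
    rw [hG, hD, Matrix.mul_diagonal]
    rw [hB, hf]
    simp only [Matrix.of_apply]
    split_ifs with hi
    · rw [eval_mul, eval_pow, eval_X, eval_prod]
      simp only [eval_add, eval_X, eval_C]
      rw [Finset.prod_congr rfl fun i' _ => add_comm (y j) (x i')]
    · rw [hr]
      rw [eval_prod]
      simp only [eval_add, eval_X, eval_C]
      have hmul := Finset.mul_prod_erase Finset.univ (fun i' => x i' + y j)
        (Finset.mem_univ (xind i hi))
      rw [← hmul, ← mul_assoc, inv_mul_cancel₀ (h _ j), one_mul]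
      exact Finset.prod_congr rfl fun i' _ => add_comm (y j) (x i')
  -- Step 2 : G = c' * W
  have step2 : G = c' * W := by
    ext i j
    rw [Matrix.mul_apply]
    simp only [hc', hW, hG, Matrix.of_apply]
    rw [Fin.sum_univ_eq_sum_range (fun n => (f i).coeff (N - 1 - n) * y j ^ (N - 1 - n)) N]
    rw [Finset.sum_range_reflect (fun d => (f i).coeff d * y j ^ d) N]
    exact eval_eq_sum_range' (hf_deg_lt i) (y j)
  -- Step 3 : det W
  have step3 : W.det = ∏ i : Fin N, ∏ j ∈ Finset.Ioi i, (y i - y j) := det_rev_vandermonde y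
  -- Step 4 : det c'
  have hNM : N - M + M = N := by omega
  set eqv : Fin (N - M) ⊕ Fin M ≃ Fin N := finSumFinEquiv.trans (finCongr hNM) with heqv
  have heqv_l : ∀ a : Fin (N - M), ((eqv (Sum.inl a) : Fin N) : ℕ) = (a : ℕ) := by
    intro a; simp [heqv]
  have heqv_r : ∀ b : Fin M, ((eqv (Sum.inr b) : Fin N) : ℕ) = N - M + (b : ℕ) := by
    intro b; simp [heqv]
  set T : Matrix (Fin (N - M)) (Fin (N - M)) F :=
    Matrix.of fun a b => c' (eqv (Sum.inl a)) (eqv (Sum.inl b)) with hT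
  set U : Matrix (Fin (N - M)) (Fin M) F :=
    Matrix.of fun a b => c' (eqv (Sum.inl a)) (eqv (Sum.inr b)) with hU
  set B1 : Matrix (Fin M) (Fin M) F :=
    Matrix.of fun a b => c' (eqv (Sum.inr a)) (eqv (Sum.inr b)) with hB1
  have hsub : c'.submatrix eqv eqv = Matrix.fromBlocks T U 0 B1 := by
    ext i j
    rcases i with a | a <;> rcases j with b | b <;>
      simp only [Matrix.submatrix_apply, Matrix.fromBlocks_apply₁₁,
        Matrix.fromBlocks_apply₁₂, Matrix.fromBlocks_apply₂₁, Matrix.fromBlocks_apply₂₂,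
        hT, hU, hB1, Matrix.of_apply, Matrix.zero_apply]
    -- remaining : bottom-left block is zero
    rw [hc', Matrix.of_apply]
    apply coeff_eq_zero_of_natDegree_lt
    rw [hf_deg]
    have h1 := heqv_r a
    have h2 := heqv_l b
    have hb := b.isLt
    have ha := a.isLt
    rw [if_neg (by omega)]
    omega
  have hdet_T : T.det = 1 := by
    rw [Matrix.det_of_upperTriangular]
    · apply Finset.prod_eq_one
      intro a _
      rw [hT, Matrix.of_apply, hc', Matrix.of_apply]
      have hdeg : (f (eqv (Sum.inl a))).natDegree = N - 1 - (a : ℕ) := by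
        rw [hf_deg, heqv_l, if_pos a.isLt]
      rw [heqv_l]
      rw [← hdeg]
      exact (hf_monic _).coeff_natDegree
    · intro a b hab
      simp only [id] at hab
      rw [hT, Matrix.of_apply, hc', Matrix.of_apply]
      apply coeff_eq_zero_of_natDegree_lt
      rw [hf_deg, heqv_l, heqv_l, if_pos a.isLt]
      have := a.isLt; have := b.isLt
      have : (b : ℕ) < (a : ℕ) := hab
      omega
  set Vt : Matrix (Fin M) (Fin M) F :=
    Matrix.of fun b j : Fin M => (-(x j)) ^ (M - 1 - (b : ℕ)) with hVt
  have hB1Vt : B1 * Vt = Matrix.diagonal fun a => ∏ i' ∈ Finset.univ.erase a, (x i' - x a) := by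
    ext a j
    rw [Matrix.mul_apply]
    have hB1e : ∀ b : Fin M, B1 a b = (r a).coeff (M - 1 - (b : ℕ)) := by
      intro b
      rw [hB1, Matrix.of_apply, hc', Matrix.of_apply, hf]
      have h1 := heqv_r a
      have h2 := heqv_r b
      have ha := a.isLt; have hb := b.isLt
      dsimp only
      rw [dif_neg (by omega)]
      have : xind (eqv (Sum.inr a)) (by omega) = a := by
        apply Fin.ext
        simp only [hxind]
        omega
      rw [this]
      congr 1
      omega
    calc (∑ b : Fin M, B1 a b * Vt b j)
        = ∑ b : Fin M, (r a).coeff (M - 1 - (b : ℕ)) * (-(x j)) ^ (M - 1 - (b : ℕ)) := by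
          apply Finset.sum_congr rfl
          intro b _
          rw [hB1e b, hVt, Matrix.of_apply]
      _ = (r a).eval (-(x j)) := by
          rw [Fin.sum_univ_eq_sum_range (fun b => (r a).coeff (M - 1 - b) * (-(x j)) ^ (M - 1 - b)) M]
          rw [Finset.sum_range_reflect (fun d => (r a).coeff d * (-(x j)) ^ d) M]
          refine (eval_eq_sum_range' ?_ (-(x j))).symm
          rw [hr_deg a]
          have := a.isLt
          omega
      _ = ∏ i' ∈ Finset.univ.erase a, (x i' - x j) := by
          rw [hr, eval_prod]
          apply Finset.prod_congr rfl
          intro i' _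
          simp only [eval_add, eval_X, eval_C]
          ring
      _ = Matrix.diagonal (fun a => ∏ i' ∈ Finset.univ.erase a, (x i' - x a)) a j := by
          rcases eq_or_ne a j with rfl | hne
          · rw [Matrix.diagonal_apply_eq]
          · rw [Matrix.diagonal_apply_ne _ hne]
            apply Finset.prod_eq_zero (Finset.mem_erase.mpr ⟨hne.symm, Finset.mem_univ j⟩)
            simp
  have hdet_Vt : Vt.det = ∏ i : Fin M, ∏ j ∈ Finset.Ioi i, (x j - x i) := by
    rw [hVt, det_rev_vandermonde (fun j : Fin M => -(x j))]
    apply Finset.prod_congr rfl; intro i _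
    apply Finset.prod_congr rfl; intro j _
    ring
  have hdet_Vt_ne : Vt.det ≠ 0 := by
    rw [hdet_Vt]
    rw [Finset.prod_ne_zero_iff]
    intro i _
    rw [Finset.prod_ne_zero_iff]
    intro j hj
    rw [Finset.mem_Ioi] at hj
    exact sub_ne_zero.mpr fun hEq => (ne_of_gt hj) (hx hEq)
  have hdet_B1 : B1.det = ∏ i : Fin M, ∏ j ∈ Finset.Ioi i, (x i - x j) := by
    have h1 : B1.det * Vt.det = ∏ a : Fin M, ∏ i' ∈ Finset.univ.erase a, (x i' - x a) := by
      rw [← Matrix.det_mul, hB1Vt, Matrix.det_diagonal]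
    rw [prod_erase_split x] at h1
    rw [← hdet_Vt] at h1
    exact mul_right_cancel₀ hdet_Vt_ne (by rw [h1, mul_comm])
  have step4 : c'.det = ∏ i : Fin M, ∏ j ∈ Finset.Ioi i, (x i - x j) := by
    rw [← Matrix.det_submatrix_equiv_self eqv c', hsub, Matrix.det_fromBlocks_zero₂₁,
      hdet_T, hdet_B1, one_mul]
  -- assemble
  have hdetD : D.det = ∏ i : Fin M, ∏ j : Fin N, (x i + y j) := by
    rw [hD, Matrix.det_diagonal, Finset.prod_comm]
  have hden_ne : (∏ i : Fin M, ∏ j : Fin N, (x i + y j)) ≠ 0 := by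
    rw [Finset.prod_ne_zero_iff]
    intro i _
    rw [Finset.prod_ne_zero_iff]
    intro j _
    exact h i j
  have key : B.det * ∏ i : Fin M, ∏ j : Fin N, (x i + y j) =
      (∏ i : Fin M, ∏ j ∈ Finset.Ioi i, (x i - x j)) *
        ∏ i : Fin N, ∏ j ∈ Finset.Ioi i, (y i - y j) := by
    have : G.det = B.det * D.det := by rw [step1, Matrix.det_mul]
    rw [step2, Matrix.det_mul, step3, step4] at this
    rw [← hdetD, ← this]
  rw [eq_div_iff hden_ne]
  exact key


/-- Bordered Cauchy determinant: the `N × N` determinant whose first `N - M` rows are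
evaluations of monic polynomials `p*_{N-M-1}, …, p*_0` at `y₁, …, y_N`, and whose last
`M` rows are the Cauchy kernel `1/(xᵢ + yⱼ)`. -/
theorem bordered_cauchy_determinant {F : Type*} [Field F] (M N : ℕ) (hMN : M < N)
    (pstar : ℕ → Polynomial F) (hmonic : ∀ k, (pstar k).Monic)
    (hdeg : ∀ k, (pstar k).natDegree = k)
    (x : Fin M → F) (y : Fin N → F) (h : ∀ i j, x i + y j ≠ 0) :
    (Matrix.of fun i j : Fin N =>
        if hi : (i : ℕ) < N - M then (pstar (N - M - 1 - (i : ℕ))).eval (y j)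
        else (x ⟨(i : ℕ) - (N - M), by have := i.isLt; omega⟩ + y j)⁻¹).det =
      ((∏ i : Fin M, ∏ j ∈ Finset.Ioi i, (x i - x j)) *
          ∏ i : Fin N, ∏ j ∈ Finset.Ioi i, (y i - y j)) /
        ∏ i : Fin M, ∏ j : Fin N, (x i + y j) := by
  set A : Matrix (Fin N) (Fin N) F := Matrix.of fun i j : Fin N =>
        if hi : (i : ℕ) < N - M then (pstar (N - M - 1 - (i : ℕ))).eval (y j)
        else (x ⟨(i : ℕ) - (N - M), by have := i.isLt; omega⟩ + y j)⁻¹ with hA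
  by_cases hx : Function.Injective x
  · -- main case
    set B : Matrix (Fin N) (Fin N) F := Matrix.of fun i j : Fin N =>
        if hi : (i : ℕ) < N - M then y j ^ (N - M - 1 - (i : ℕ))
        else (x ⟨(i : ℕ) - (N - M), by have := i.isLt; omega⟩ + y j)⁻¹ with hB
    set L : Matrix (Fin N) (Fin N) F := Matrix.of fun i i' : Fin N =>
        if (i : ℕ) < N - M ∧ (i' : ℕ) < N - M then
          (pstar (N - M - 1 - (i : ℕ))).coeff (N - M - 1 - (i' : ℕ))
        else if i = i' then 1 else 0 with hL
    have hAB : A = L * B := by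
      ext i j
      rw [Matrix.mul_apply, hA, Matrix.of_apply]
      by_cases hi : (i : ℕ) < N - M
      · rw [dif_pos hi]
        have hterm : ∀ i' : Fin N, L i i' * B i' j =
            if (i' : ℕ) < N - M then
              (pstar (N - M - 1 - (i : ℕ))).coeff (N - M - 1 - (i' : ℕ)) *
                y j ^ (N - M - 1 - (i' : ℕ)) else 0 := by
          intro i'
          by_cases hi' : (i' : ℕ) < N - M
          · rw [if_pos hi', hL, hB, Matrix.of_apply, Matrix.of_apply,
              if_pos ⟨hi, hi'⟩, dif_pos hi']
          · have hne : i ≠ i' := by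
              intro hEq; exact hi' (hEq ▸ hi)
            rw [if_neg hi', hL, Matrix.of_apply, if_neg (fun hc => hi' hc.2), if_neg hne,
              zero_mul]
        rw [Finset.sum_congr rfl fun i' _ => hterm i']
        rw [Fin.sum_univ_eq_sum_range (fun n => if n < N - M then
          (pstar (N - M - 1 - (i : ℕ))).coeff (N - M - 1 - n) * y j ^ (N - M - 1 - n) else 0) N]
        rw [← Finset.sum_subset (Finset.range_subset_range.mpr (by omega : N - M ≤ N))
          (fun n _ hn => by rw [if_neg (by simpa using hn)])]
        rw [Finset.sum_congr rfl fun n hn => if_pos (Finset.mem_range.mp hn)]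
        rw [Finset.sum_range_reflect
          (fun d => (pstar (N - M - 1 - (i : ℕ))).coeff d * y j ^ d) (N - M)]
        refine eval_eq_sum_range' ?_ (y j)
        rw [hdeg]
        omega
      · rw [dif_neg hi]
        have hterm : ∀ i' : Fin N, L i i' * B i' j = if i = i' then B i' j else 0 := by
          intro i'
          rw [hL, Matrix.of_apply, if_neg (fun hc => hi hc.1)]
          split_ifs with hEq
          · rw [one_mul]
          · rw [zero_mul]
        rw [Finset.sum_congr rfl fun i' _ => hterm i', Finset.sum_ite_eq Finset.univ i
          (fun i' => B i' j), if_pos (Finset.mem_univ i)]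
        rw [hB, Matrix.of_apply, dif_neg hi]
    have htri : L.BlockTriangular id := by
      intro i i' hlt
      have hlt' : (i' : ℕ) < (i : ℕ) := hlt
      rw [hL, Matrix.of_apply]
      by_cases hi : (i : ℕ) < N - M
      · rw [if_pos ⟨hi, by omega⟩]
        apply coeff_eq_zero_of_natDegree_lt
        rw [hdeg]
        omega
      · rw [if_neg (fun hc => hi hc.1), if_neg (fun hEq => absurd (hEq ▸ hlt') (lt_irrefl _))]
    have hdetL : L.det = 1 := by
      rw [Matrix.det_of_upperTriangular htri]
      apply Finset.prod_eq_one
      intro i _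
      rw [hL, Matrix.of_apply]
      by_cases hi : (i : ℕ) < N - M
      · rw [if_pos ⟨hi, hi⟩]
        have := (hmonic (N - M - 1 - (i : ℕ))).coeff_natDegree
        rwa [hdeg] at this
      · rw [if_neg (fun hc => hi hc.1), if_pos rfl]
    rw [hAB, Matrix.det_mul, hdetL, one_mul]
    exact bordered_core M N hMN x y h hx
  · -- non-injective x : both sides vanish
    rw [Function.not_injective_iff] at hx
    obtain ⟨a, b, hab, hne⟩ := hx
    -- get an ordered pair
    obtain ⟨p, q, hpq, hxpq⟩ : ∃ p q : Fin M, p < q ∧ x p = x q := by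
      rcases lt_or_gt_of_ne hne with hlt | hlt
      · exact ⟨a, b, hlt, hab⟩
      · exact ⟨b, a, hlt, hab.symm⟩
    have hrow : A.det = 0 := by
      have hMle : ∀ p : Fin M, N - M + (p : ℕ) < N := by
        intro p; have := p.isLt; omega
      apply Matrix.det_zero_of_row_eq
        (i := (⟨N - M + (p : ℕ), hMle p⟩ : Fin N)) (j := (⟨N - M + (q : ℕ), hMle q⟩ : Fin N))
      · apply Fin.ne_of_val_ne
        show N - M + (p : ℕ) ≠ N - M + (q : ℕ)
        have : (p : ℕ) < (q : ℕ) := hpq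
        omega
      · funext j
        rw [hA]
        simp only [Matrix.of_apply]
        rw [dif_neg (show ¬(N - M + (p : ℕ) < N - M) by omega),
          dif_neg (show ¬(N - M + (q : ℕ) < N - M) by omega)]
        have h1 : ∀ (hp : N - M + (p : ℕ) - (N - M) < M),
            (⟨N - M + (p : ℕ) - (N - M), hp⟩ : Fin M) = p := by
          intro hp; apply Fin.ext; show N - M + (p : ℕ) - (N - M) = (p : ℕ); omega
        have h2 : ∀ (hq : N - M + (q : ℕ) - (N - M) < M),
            (⟨N - M + (q : ℕ) - (N - M), hq⟩ : Fin M) = q := by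
          intro hq; apply Fin.ext; show N - M + (q : ℕ) - (N - M) = (q : ℕ); omega
        rw [h1, h2, hxpq]
    rw [hrow]
    rw [Finset.prod_eq_zero (Finset.mem_univ p)
      (Finset.prod_eq_zero (Finset.mem_Ioi.mpr hpq) (by rw [hxpq, sub_self]))]
    rw [zero_mul, zero_div]
end

section
/- More generally, if p_n (n = 0, 1, ..., M+N-1) are any monic polynomials with deg p_n = n, and \tilde{s}_\lambda(x_1,...,x_M) = \det(p_{\lambda_i + M - i}(x_j))_{1\leq i,j\leq M}, then \Delta(y_1,...,y_N)\,\Delta(x_1,...,x_M)\,\prod_{i,j}(y_j - x_i) = \sum_{\lambda} (-1)^{|\lambda|} \tilde{s}_\lambda(x_1,...,x_M)\, \tilde{s}_{\lambda^\dagger}(y_1,...,y_N), where \lambda runs over partitions in the M \times N rectangle, \Delta denotes the difference product, and \lambda^\dagger = (N-\lambda_M, ..., N-\lambda_1)'. -/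
open Finset Equiv Equiv.Perm Polynomial Matrix

section pairsplit
variable {α : Type*} [CommMonoid α]

lemma dc_prod_Ioi_eq {n : ℕ} (f : Fin n → α) (i : Fin n) :
    ∏ j ∈ Finset.Ioi i, f j = ∏ j : Fin n, if i < j then f j else 1 := by
  rw [Finset.prod_ite, Finset.prod_const_one, mul_one]
  congr 1
  ext j; simp

lemma dc_pair_split (M N : ℕ) (F : Fin (M+N) → Fin (M+N) → α) :
    (∏ i : Fin (M+N), ∏ j ∈ Finset.Ioi i, F i j) =
      ((∏ i : Fin M, ∏ j ∈ Finset.Ioi i, F (Fin.castAdd N i) (Fin.castAdd N j)) *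
       (∏ i : Fin N, ∏ j ∈ Finset.Ioi i, F (Fin.natAdd M i) (Fin.natAdd M j))) *
      ∏ i : Fin M, ∏ j : Fin N, F (Fin.castAdd N i) (Fin.natAdd M j) := by
  have h1 : ∀ (a j : Fin M), (Fin.castAdd N a < Fin.castAdd N j) ↔ (a < j) := fun _ _ => Iff.rfl
  have h2 : ∀ (a : Fin M) (b : Fin N), Fin.castAdd N a < Fin.natAdd M b := by
    intro a b; rw [Fin.lt_def]; show (a:ℕ) < M + b; omega
  have h3 : ∀ (a : Fin N) (j : Fin M), ¬ (Fin.natAdd M a < Fin.castAdd N j) := by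
    intro a j; rw [Fin.lt_def]; show ¬ (M + a < (j:ℕ)); omega
  have h4 : ∀ (a b : Fin N), (Fin.natAdd M a < Fin.natAdd M b) ↔ (a < b) := by
    intro a b; rw [Fin.lt_def, Fin.lt_def]; show M + (a:ℕ) < M + b ↔ _; omega
  have key : ∀ i : Fin (M+N), ∏ j ∈ Finset.Ioi i, F i j
      = (∏ a : Fin M, if i < Fin.castAdd N a then F i (Fin.castAdd N a) else 1) *
        ∏ b : Fin N, if i < Fin.natAdd M b then F i (Fin.natAdd M b) else 1 := by
    intro i
    rw [dc_prod_Ioi_eq, ← Equiv.prod_comp finSumFinEquiv (fun j => if i < j then F i j else 1),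
      Fintype.prod_sum_type]
    simp
    rfl
  calc ∏ i : Fin (M+N), ∏ j ∈ Finset.Ioi i, F i j
      = ∏ c : Fin M ⊕ Fin N, ∏ j ∈ Finset.Ioi (finSumFinEquiv c), F (finSumFinEquiv c) j := by
        rw [Equiv.prod_comp finSumFinEquiv (fun i => ∏ j ∈ Finset.Ioi i, F i j)]
    _ = _ := by
        rw [Fintype.prod_sum_type]
        simp only [finSumFinEquiv_apply_left, finSumFinEquiv_apply_right, key]
        simp only [h2, if_true, if_pos]
        have e3 : ∀ (a : Fin N), (∏ j : Fin M,
            if Fin.natAdd M a < Fin.castAdd N j then F (Fin.natAdd M a) (Fin.castAdd N j) else 1)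
            = 1 := by
          intro a
          rw [Finset.prod_eq_one]
          intro j _
          rw [if_neg (h3 a j)]
        simp only [e3, one_mul]
        rw [Finset.prod_mul_distrib]
        have eA : (∏ a : Fin M, ∏ j : Fin M,
            if Fin.castAdd N a < Fin.castAdd N j then F (Fin.castAdd N a) (Fin.castAdd N j) else 1)
            = ∏ i : Fin M, ∏ j ∈ Finset.Ioi i, F (Fin.castAdd N i) (Fin.castAdd N j) := by
          apply Finset.prod_congr rfl; intro a _
          rw [dc_prod_Ioi_eq (fun j => F (Fin.castAdd N a) (Fin.castAdd N j))]
          apply Finset.prod_congr rfl; intro j _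
          exact if_congr (h1 a j) rfl rfl
        have eC : (∏ a : Fin N, ∏ b : Fin N,
            if Fin.natAdd M a < Fin.natAdd M b then F (Fin.natAdd M a) (Fin.natAdd M b) else 1)
            = ∏ i : Fin N, ∏ j ∈ Finset.Ioi i, F (Fin.natAdd M i) (Fin.natAdd M j) := by
          apply Finset.prod_congr rfl; intro a _
          rw [dc_prod_Ioi_eq (fun j => F (Fin.natAdd M a) (Fin.natAdd M j))]
          apply Finset.prod_congr rfl; intro j _
          exact if_congr (h4 a j) rfl rfl
        rw [eA, eC]
        rw [mul_assoc, mul_comm (∏ i : Fin M, ∏ j : Fin N, F (Fin.castAdd N i) (Fin.natAdd M j)),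
          ← mul_assoc]

lemma dc_rev_pair {n : ℕ} (F : Fin n → Fin n → α) :
    ∏ i : Fin n, ∏ j ∈ Finset.Ioi i, F i j
      = ∏ i : Fin n, ∏ j ∈ Finset.Ioi i, F (Fin.rev j) (Fin.rev i) := by
  have grev : ∀ (g : Fin n → Fin n → α), (∏ i : Fin n, ∏ j : Fin n, g i j)
      = ∏ i : Fin n, ∏ j : Fin n, g (Fin.rev i) (Fin.rev j) := by
    intro g
    rw [← Equiv.prod_comp Fin.revPerm (fun i => ∏ j : Fin n, g i j)]
    exact Finset.prod_congr rfl fun i _ =>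
      (Equiv.prod_comp Fin.revPerm (g (Fin.rev i))).symm
  simp only [dc_prod_Ioi_eq]
  rw [grev (fun i j => if i < j then F i j else 1)]
  rw [Finset.prod_comm]
  apply Finset.prod_congr rfl; intro i _
  apply Finset.prod_congr rfl; intro j _
  exact if_congr (Fin.rev_lt_rev) rfl rfl
end pairsplit
section core
variable {M N : ℕ}

def dcS (lam : Fin M → Fin (N+1)) (i : Fin M) : Fin (M+N) :=
  ⟨(lam i.rev : ℕ) + i, by have h1 := (lam i.rev).isLt; have h2 := i.isLt; omega⟩

def dcNu (lam : Fin M → Fin (N+1)) (j : ℕ) : ℕ :=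
  (Finset.univ.filter (fun k : Fin M => (lam k : ℕ) ≤ j)).card

def dcT (lam : Fin M → Fin (N+1)) (j : Fin N) : Fin (M+N) :=
  ⟨(j : ℕ) + dcNu lam j, by
    have h1 := j.isLt
    have h2 : dcNu lam j ≤ M := by
      refine le_trans (Finset.card_filter_le _ _) ?_
      simp
    omega⟩

variable {lam : Fin M → Fin (N+1)}

lemma dcS_strictMono (hlam : ∀ i j : Fin M, i ≤ j → (lam j : ℕ) ≤ (lam i : ℕ)) :
    StrictMono (dcS lam) := by
  intro i j h
  have h1 : (lam i.rev : ℕ) ≤ lam j.rev :=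
    hlam j.rev i.rev (le_of_lt (Fin.rev_lt_rev.2 h))
  have h2 : (i : ℕ) < j := h
  simp only [Fin.lt_def, dcS]
  omega

lemma dcNu_mono {j j' : ℕ} (h : j ≤ j') : dcNu lam j ≤ dcNu lam j' := by
  apply Finset.card_le_card
  intro k hk
  rw [Finset.mem_filter] at hk ⊢
  exact ⟨hk.1, le_trans hk.2 h⟩

lemma dcT_strictMono : StrictMono (dcT lam) := by
  intro i j h
  have h1 : dcNu lam i ≤ dcNu lam j := dcNu_mono (le_of_lt h)
  have h2 : (i : ℕ) < j := h
  simp only [Fin.lt_def, dcT]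
  omega

lemma dcT_lt_dcS (hlam : ∀ i j : Fin M, i ≤ j → (lam j : ℕ) ≤ (lam i : ℕ))
    (i : Fin M) (j : Fin N) (h : (j : ℕ) < lam i.rev) :
    (dcT lam j : ℕ) < dcS lam i := by
  have hnu : dcNu lam j ≤ (i : ℕ) := by
    have hsub : Finset.univ.filter (fun k : Fin M => (lam k : ℕ) ≤ j) ⊆ Finset.Ioi i.rev := by
      intro k hk
      simp only [Finset.mem_filter, Finset.mem_univ, true_and] at hk
      rw [Finset.mem_Ioi]
      by_contra hc
      exact absurd (hlam k i.rev (not_lt.1 hc)) (by omega)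
    have := Finset.card_le_card hsub
    rw [Fin.card_Ioi, Fin.val_rev] at this
    have := i.isLt
    unfold dcNu
    omega
  simp only [dcS, dcT]
  omega

lemma dcS_lt_dcT (hlam : ∀ i j : Fin M, i ≤ j → (lam j : ℕ) ≤ (lam i : ℕ))
    (i : Fin M) (j : Fin N) (h : (lam i.rev : ℕ) ≤ j) :
    (dcS lam i : ℕ) < dcT lam j := by
  have hnu : (i : ℕ) + 1 ≤ dcNu lam j := by
    have hsub : Finset.Ici i.rev ⊆ Finset.univ.filter (fun k : Fin M => (lam k : ℕ) ≤ j) := by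
      intro k hk
      rw [Finset.mem_Ici] at hk
      simp only [Finset.mem_filter, Finset.mem_univ, true_and]
      exact le_trans (hlam i.rev k hk) h
    have := Finset.card_le_card hsub
    rw [Fin.card_Ici, Fin.val_rev] at this
    have := i.isLt
    unfold dcNu
    omega
  simp only [dcS, dcT]
  omega

lemma dcS_ne_dcT (hlam : ∀ i j : Fin M, i ≤ j → (lam j : ℕ) ≤ (lam i : ℕ))
    (i : Fin M) (j : Fin N) : dcS lam i ≠ dcT lam j := by
  rcases lt_or_ge (j : ℕ) (lam i.rev : ℕ) with h | h
  · have := dcT_lt_dcS hlam i j h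
    intro hc; rw [hc] at this; omega
  · have := dcS_lt_dcT hlam i j h
    intro hc; rw [hc] at this; omega

lemma dcT_image (hlam : ∀ i j : Fin M, i ≤ j → (lam j : ℕ) ≤ (lam i : ℕ)) :
    Finset.univ.image (dcT lam) = (Finset.univ.image (dcS lam))ᶜ := by
  apply Finset.eq_of_subset_of_card_le
  · intro t ht
    simp only [Finset.mem_image, Finset.mem_univ, true_and] at ht
    obtain ⟨j, rfl⟩ := ht
    rw [Finset.mem_compl]
    simp only [Finset.mem_image, Finset.mem_univ, true_and, not_exists]
    exact fun i => dcS_ne_dcT hlam i j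
  · rw [Finset.card_compl, Finset.card_image_of_injective _ (dcS_strictMono hlam).injective,
      Finset.card_image_of_injective _ (dcT_strictMono (lam := lam)).injective]
    simp

lemma dc_count (hlam : ∀ i j : Fin M, i ≤ j → (lam j : ℕ) ≤ (lam i : ℕ)) (i : Fin M) :
    (Finset.univ.filter (fun j : Fin N => (dcT lam j : ℕ) < (dcS lam i : ℕ))).card
      = (lam i.rev : ℕ) := by
  have hiff : ∀ j : Fin N, ((dcT lam j : ℕ) < (dcS lam i : ℕ)) ↔ ((j : ℕ) < (lam i.rev : ℕ)) := by
    intro j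
    constructor
    · intro h
      by_contra hc
      have := dcS_lt_dcT hlam i j (not_lt.1 hc)
      omega
    · exact dcT_lt_dcS hlam i j
  rw [Finset.filter_congr (fun j _ => hiff j), Finset.card_filter,
    Fin.sum_univ_eq_sum_range (fun k => if k < (lam i.rev : ℕ) then 1 else 0) N,
    ← Finset.card_filter]
  have hle : (lam i.rev : ℕ) ≤ N := by have := (lam i.rev).isLt; omega
  have : (Finset.range N).filter (fun k => k < (lam i.rev : ℕ)) = Finset.range (lam i.rev : ℕ) := by
    ext k
    simp only [Finset.mem_filter, Finset.mem_range]
    omega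
  rw [this, Finset.card_range]

end core
section rho
variable {M N : ℕ} {lam : Fin M → Fin (N+1)}

lemma dc_elim_injective (hlam : ∀ i j : Fin M, i ≤ j → (lam j : ℕ) ≤ (lam i : ℕ)) :
    Function.Injective (Sum.elim (dcS lam) (dcT lam)) := by
  intro u v h
  match u, v with
  | Sum.inl a, Sum.inl b =>
    rw [Sum.elim_inl, Sum.elim_inl] at h
    rw [(dcS_strictMono hlam).injective h]
  | Sum.inl a, Sum.inr b =>
    exact absurd h (dcS_ne_dcT hlam a b)
  | Sum.inr a, Sum.inl b =>
    exact absurd h.symm (dcS_ne_dcT hlam b a)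
  | Sum.inr a, Sum.inr b =>
    rw [Sum.elim_inr, Sum.elim_inr] at h
    rw [(dcT_strictMono (lam := lam)).injective h]

noncomputable def dcRho (lam : Fin M → Fin (N+1))
    (hlam : ∀ i j : Fin M, i ≤ j → (lam j : ℕ) ≤ (lam i : ℕ)) : Equiv.Perm (Fin (M+N)) :=
  Equiv.ofBijective (fun r => Sum.elim (dcS lam) (dcT lam) (finSumFinEquiv.symm r))
    (Finite.injective_iff_bijective.1
      ((dc_elim_injective hlam).comp finSumFinEquiv.symm.injective))

lemma dcRho_castAdd (hlam : ∀ i j : Fin M, i ≤ j → (lam j : ℕ) ≤ (lam i : ℕ)) (i : Fin M) :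
    dcRho lam hlam (Fin.castAdd N i) = dcS lam i := by
  simp [dcRho, Equiv.ofBijective]

lemma dcRho_natAdd (hlam : ∀ i j : Fin M, i ≤ j → (lam j : ℕ) ≤ (lam i : ℕ)) (j : Fin N) :
    dcRho lam hlam (Fin.natAdd M j) = dcT lam j := by
  simp [dcRho, Equiv.ofBijective]

lemma dc_int_sign_prod {ι : Type*} (s : Finset ι) (f : ι → ℤ) :
    (∏ x ∈ s, f x).sign = ∏ x ∈ s, (f x).sign := by
  classical
  induction s using Finset.cons_induction with
  | empty => simp
  | cons a s ha ih =>
    rw [Finset.prod_cons, Finset.prod_cons, Int.sign_mul, ih]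

lemma dcRho_sign (hlam : ∀ i j : Fin M, i ≤ j → (lam j : ℕ) ≤ (lam i : ℕ)) :
    Equiv.Perm.sign (dcRho lam hlam) = (-1 : ℤˣ) ^ (∑ i : Fin M, (lam i : ℕ)) := by
  classical
  set ρ := dcRho lam hlam with hρ
  set v : Fin (M+N) → ℤ := fun r => (r : ℤ) with hv
  have hsub : (Matrix.vandermonde v).submatrix ρ id = Matrix.vandermonde (v ∘ ρ) := by
    ext i j
    simp [Matrix.vandermonde]
  have hperm := Matrix.det_permute ρ (Matrix.vandermonde v)
  rw [hsub, Matrix.det_vandermonde, Matrix.det_vandermonde] at hperm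
  -- hperm : ∏ i, ∏ j ∈ Ioi i, ((v ∘ ρ) j - (v ∘ ρ) i) = ↑↑(sign ρ) * ∏ i, ∏ j ∈ Ioi i, (v j - v i)
  have hV : (0:ℤ) < ∏ i : Fin (M+N), ∏ j ∈ Finset.Ioi i, (v j - v i) := by
    apply Finset.prod_pos
    intro i _
    apply Finset.prod_pos
    intro j hj
    rw [Finset.mem_Ioi] at hj
    have : (i:ℕ) < j := hj
    simp only [hv]
    omega
  have hsplit := dc_pair_split M N (fun i j => (v ∘ ρ) j - (v ∘ ρ) i)
  have hS : (0:ℤ) < ∏ i : Fin M, ∏ j ∈ Finset.Ioi i,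
      ((v ∘ ρ) (Fin.castAdd N j) - (v ∘ ρ) (Fin.castAdd N i)) := by
    apply Finset.prod_pos; intro i _
    apply Finset.prod_pos; intro j hj
    rw [Finset.mem_Ioi] at hj
    simp only [Function.comp_apply, hρ, dcRho_castAdd hlam, hv]
    have := dcS_strictMono hlam hj
    rw [Fin.lt_def] at this
    omega
  have hT : (0:ℤ) < ∏ i : Fin N, ∏ j ∈ Finset.Ioi i,
      ((v ∘ ρ) (Fin.natAdd M j) - (v ∘ ρ) (Fin.natAdd M i)) := by
    apply Finset.prod_pos; intro i _
    apply Finset.prod_pos; intro j hj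
    rw [Finset.mem_Ioi] at hj
    simp only [Function.comp_apply, hρ, dcRho_natAdd hlam, hv]
    have := dcT_strictMono (lam := lam) hj
    rw [Fin.lt_def] at this
    omega
  have hcross : (∏ i : Fin M, ∏ j : Fin N,
      ((v ∘ ρ) (Fin.natAdd M j) - (v ∘ ρ) (Fin.castAdd N i))).sign
      = (-1 : ℤ) ^ (∑ i : Fin M, (lam i : ℕ)) := by
    rw [dc_int_sign_prod]
    have : ∀ i : Fin M, (∏ j : Fin N,
        ((v ∘ ρ) (Fin.natAdd M j) - (v ∘ ρ) (Fin.castAdd N i))).sign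
        = (-1 : ℤ) ^ ((lam i.rev : ℕ)) := by
      intro i
      rw [dc_int_sign_prod]
      have : ∀ j : Fin N, ((v ∘ ρ) (Fin.natAdd M j) - (v ∘ ρ) (Fin.castAdd N i)).sign
          = if (dcT lam j : ℕ) < (dcS lam i : ℕ) then -1 else 1 := by
        intro j
        simp only [Function.comp_apply, hρ, dcRho_castAdd hlam, dcRho_natAdd hlam, hv]
        by_cases h : (dcT lam j : ℕ) < (dcS lam i : ℕ)
        · rw [if_pos h]
          apply Int.sign_eq_neg_one_of_neg
          omega
        · rw [if_neg h]
          apply Int.sign_eq_one_of_pos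
          have hne := dcS_ne_dcT hlam i j
          rw [Ne, Fin.ext_iff] at hne
          omega
      rw [Finset.prod_congr rfl (fun j _ => this j), Finset.prod_ite, Finset.prod_const,
        Finset.prod_const, one_pow, mul_one, dc_count hlam i]
    rw [Finset.prod_congr rfl (fun i _ => this i), Finset.prod_pow_eq_pow_sum]
    congr 1
    exact Equiv.sum_comp (Fin.revPerm) (fun k => (lam k : ℕ))
  -- take signs in hperm
  have hsign := congrArg Int.sign hperm
  rw [hsplit] at hsign
  rw [Int.sign_mul, Int.sign_mul, Int.sign_mul, Int.sign_eq_one_of_pos hS,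
    Int.sign_eq_one_of_pos hT, Int.sign_eq_one_of_pos hV, hcross, one_mul, one_mul, mul_one]
    at hsign
  simp only [Int.cast_id] at hsign
  have hcoe : Int.sign ((Equiv.Perm.sign ρ : ℤ)) = (Equiv.Perm.sign ρ : ℤ) := by
    rcases Int.units_eq_one_or (Equiv.Perm.sign ρ) with h | h <;> rw [h] <;> rfl
  rw [hcoe] at hsign
  apply Units.ext
  rw [Units.val_pow_eq_pow_val]
  simp only [Units.val_neg, Units.val_one]
  exact hsign.symm

end rho
section laplace
variable {M N : ℕ}

lemma dc_strictMono_add_le {a b : ℕ} {u : Fin a → Fin b} (hu : StrictMono u) :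
    ∀ (i j : Fin a), (i : ℕ) ≤ j → (u i : ℕ) + (j : ℕ) ≤ (u j : ℕ) + (i : ℕ) := by
  have key : ∀ (d : ℕ) (i j : Fin a), (j : ℕ) = (i : ℕ) + d → (u i : ℕ) + d ≤ (u j : ℕ) := by
    intro d
    induction d with
    | zero =>
      intro i j h
      have : i = j := Fin.ext (by omega)
      subst this; omega
    | succ d ih =>
      intro i j h
      have hj := j.isLt
      have hlt : (⟨(i:ℕ) + d, by omega⟩ : Fin a) < j := by
        rw [Fin.lt_def]; show (i:ℕ) + d < (j:ℕ); omega
      have h2 := hu hlt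
      rw [Fin.lt_def] at h2
      have h3 := ih i ⟨(i:ℕ) + d, by omega⟩ rfl
      omega
  intro i j h
  have := key ((j:ℕ) - i) i j (by omega)
  omega

lemma dc_le_apply {a b : ℕ} {u : Fin a → Fin b} (hu : StrictMono u) (i : Fin a) :
    (i : ℕ) ≤ u i := by
  have h0 : (0:ℕ) < a := i.pos
  have h1 := dc_strictMono_add_le hu ⟨0, h0⟩ i (by simp)
  have h2 : ((⟨0, h0⟩ : Fin a) : ℕ) = 0 := rfl
  omega

lemma dcS_eq_of_image_eq {lam lam' : Fin M → Fin (N+1)}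
    (hlam : ∀ i j : Fin M, i ≤ j → (lam j : ℕ) ≤ (lam i : ℕ))
    (hlam' : ∀ i j : Fin M, i ≤ j → (lam' j : ℕ) ≤ (lam' i : ℕ))
    (h : Finset.univ.image (dcS lam) = Finset.univ.image (dcS lam')) : lam = lam' := by
  have hcard : (Finset.univ.image (dcS lam)).card = M := by
    rw [Finset.card_image_of_injective _ (dcS_strictMono hlam).injective]
    simp
  have e1 := Finset.orderEmbOfFin_unique hcard
    (fun k => Finset.mem_image_of_mem _ (Finset.mem_univ k)) (dcS_strictMono hlam)
  have e2 := Finset.orderEmbOfFin_unique hcard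
    (fun k => by rw [h]; exact Finset.mem_image_of_mem _ (Finset.mem_univ k))
    (dcS_strictMono hlam')
  have h1 : dcS lam = dcS lam' := e1.trans e2.symm
  funext k
  have h2 := congrFun h1 k.rev
  rw [Fin.ext_iff] at h2 ⊢
  simp only [dcS, Fin.rev_rev] at h2
  omega

lemma dcT_eq_orderEmbOfFin {lam : Fin M → Fin (N+1)}
    (hlam : ∀ i j : Fin M, i ≤ j → (lam j : ℕ) ≤ (lam i : ℕ))
    {S' : Finset (Fin (M+N))} (himg : Finset.univ.image (dcS lam) = S')
    (hcard : (S'ᶜ).card = N) :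
    dcT lam = fun j => (S'ᶜ).orderEmbOfFin hcard j := by
  apply Finset.orderEmbOfFin_unique hcard
  · intro k
    rw [← himg, ← dcT_image hlam]
    exact Finset.mem_image_of_mem _ (Finset.mem_univ k)
  · exact dcT_strictMono

noncomputable def dcBuild (lam : Fin M → Fin (N+1))
    (hlam : ∀ i j : Fin M, i ≤ j → (lam j : ℕ) ≤ (lam i : ℕ))
    (τ₁ : Equiv.Perm (Fin M)) (τ₂ : Equiv.Perm (Fin N)) : Equiv.Perm (Fin (M+N)) :=
  (dcRho lam hlam) * (finSumFinEquiv.permCongr (Equiv.sumCongr τ₁ τ₂))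

lemma dcBuild_castAdd {lam : Fin M → Fin (N+1)}
    (hlam : ∀ i j : Fin M, i ≤ j → (lam j : ℕ) ≤ (lam i : ℕ))
    (τ₁ : Equiv.Perm (Fin M)) (τ₂ : Equiv.Perm (Fin N)) (i : Fin M) :
    dcBuild lam hlam τ₁ τ₂ (Fin.castAdd N i) = dcS lam (τ₁ i) := by
  simp only [dcBuild, Equiv.Perm.mul_apply, Equiv.permCongr_apply,
    finSumFinEquiv_symm_apply_castAdd, Equiv.sumCongr_apply, Sum.map_inl,
    finSumFinEquiv_apply_left, dcRho_castAdd hlam]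

lemma dcBuild_natAdd {lam : Fin M → Fin (N+1)}
    (hlam : ∀ i j : Fin M, i ≤ j → (lam j : ℕ) ≤ (lam i : ℕ))
    (τ₁ : Equiv.Perm (Fin M)) (τ₂ : Equiv.Perm (Fin N)) (j : Fin N) :
    dcBuild lam hlam τ₁ τ₂ (Fin.natAdd M j) = dcT lam (τ₂ j) := by
  simp only [dcBuild, Equiv.Perm.mul_apply, Equiv.permCongr_apply,
    finSumFinEquiv_symm_apply_natAdd, Equiv.sumCongr_apply, Sum.map_inr,
    finSumFinEquiv_apply_right, dcRho_natAdd hlam]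

lemma dcBuild_sign {lam : Fin M → Fin (N+1)}
    (hlam : ∀ i j : Fin M, i ≤ j → (lam j : ℕ) ≤ (lam i : ℕ))
    (τ₁ : Equiv.Perm (Fin M)) (τ₂ : Equiv.Perm (Fin N)) :
    Equiv.Perm.sign (dcBuild lam hlam τ₁ τ₂)
      = (-1 : ℤˣ) ^ (∑ i : Fin M, (lam i : ℕ)) * Equiv.Perm.sign τ₁ * Equiv.Perm.sign τ₂ := by
  rw [dcBuild, Equiv.Perm.sign_mul, dcRho_sign hlam, Equiv.Perm.sign_permCongr,
    Equiv.Perm.sign_sumCongr, mul_assoc]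

variable {R : Type*} [CommRing R]

theorem dc_laplace (p : ℕ → Polynomial R) (x : Fin M → R) (y : Fin N → R) :
    ∑ σ : Equiv.Perm (Fin (M+N)), ((Equiv.Perm.sign σ : ℤ) : R) *
        ∏ r : Fin (M+N), (p ((σ r : ℕ))).eval (Fin.append x y r)
      = ∑ lam ∈ Finset.univ.filter
          (fun lam : Fin M → Fin (N + 1) => ∀ i j : Fin M, i ≤ j → (lam j : ℕ) ≤ (lam i : ℕ)),
          (-1 : R) ^ (∑ i : Fin M, (lam i : ℕ)) *
            (Matrix.of fun i j : Fin M => (p ((dcS lam i : ℕ))).eval (x j)).det *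
            (Matrix.of fun i j : Fin N => (p ((dcT lam i : ℕ))).eval (y j)).det := by
  classical
  have hdet : ∀ lam : Fin M → Fin (N+1),
      (-1 : R) ^ (∑ i : Fin M, (lam i : ℕ)) *
        (Matrix.of fun i j : Fin M => (p ((dcS lam i : ℕ))).eval (x j)).det *
        (Matrix.of fun i j : Fin N => (p ((dcT lam i : ℕ))).eval (y j)).det
      = ∑ τ₁ : Equiv.Perm (Fin M), ∑ τ₂ : Equiv.Perm (Fin N),
          (-1 : R) ^ (∑ i : Fin M, (lam i : ℕ)) *
          (((Equiv.Perm.sign τ₁ : ℤ) : R) * ∏ j : Fin M, (p ((dcS lam (τ₁ j) : ℕ))).eval (x j)) *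
          (((Equiv.Perm.sign τ₂ : ℤ) : R) * ∏ j : Fin N, (p ((dcT lam (τ₂ j) : ℕ))).eval (y j)) := by
    intro lam
    rw [Matrix.det_apply', Matrix.det_apply', mul_assoc, Finset.sum_mul_sum, Finset.mul_sum]
    apply Finset.sum_congr rfl
    intro τ₁ _
    rw [Finset.mul_sum]
    apply Finset.sum_congr rfl
    intro τ₂ _
    simp only [Matrix.of_apply]
    ring
  rw [Finset.sum_congr rfl (fun lam _ => hdet lam)]
  rw [← Finset.sum_product']
  rw [← Finset.sum_product']
  refine (Finset.sum_bij
    (fun q hq => dcBuild q.1.1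
      (by
        have h1 := (Finset.mem_product.1 (Finset.mem_product.1 hq).1).1
        rw [Finset.mem_filter] at h1
        exact h1.2) q.1.2 q.2)
    (fun _ _ => Finset.mem_univ _) ?inj ?surj ?val).symm
  case val =>
    rintro ⟨⟨lam, τ₁⟩, τ₂⟩ hq
    have hlam : ∀ i j : Fin M, i ≤ j → (lam j : ℕ) ≤ (lam i : ℕ) := by
      have h1 := (Finset.mem_product.1 (Finset.mem_product.1 hq).1).1
      rw [Finset.mem_filter] at h1
      exact h1.2
    have hprod : (∏ r : Fin (M+N),
        (p ((dcBuild lam hlam τ₁ τ₂ r : ℕ))).eval (Fin.append x y r))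
        = (∏ j : Fin M, (p ((dcS lam (τ₁ j) : ℕ))).eval (x j)) *
          ∏ j : Fin N, (p ((dcT lam (τ₂ j) : ℕ))).eval (y j) := by
      rw [← Equiv.prod_comp finSumFinEquiv
        (fun r => (p ((dcBuild lam hlam τ₁ τ₂ r : ℕ))).eval (Fin.append x y r)),
        Fintype.prod_sum_type]
      simp only [finSumFinEquiv_apply_left, finSumFinEquiv_apply_right,
        dcBuild_castAdd hlam, dcBuild_natAdd hlam, Fin.append_left, Fin.append_right]
    have hsign : ((Equiv.Perm.sign (dcBuild lam hlam τ₁ τ₂) : ℤ) : R)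
        = (-1 : R) ^ (∑ i : Fin M, (lam i : ℕ)) *
          ((Equiv.Perm.sign τ₁ : ℤ) : R) * ((Equiv.Perm.sign τ₂ : ℤ) : R) := by
      rw [dcBuild_sign hlam]
      push_cast
      ring
    show _ = ((Equiv.Perm.sign (dcBuild lam hlam τ₁ τ₂) : ℤ) : R) * _
    rw [hsign, hprod]
    ring
  case inj =>
    rintro ⟨⟨lam, τ₁⟩, τ₂⟩ ha ⟨⟨lam', τ₁'⟩, τ₂'⟩ hb h
    have hlam : ∀ i j : Fin M, i ≤ j → (lam j : ℕ) ≤ (lam i : ℕ) := by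
      have h1 := (Finset.mem_product.1 (Finset.mem_product.1 ha).1).1
      rw [Finset.mem_filter] at h1; exact h1.2
    have hlam' : ∀ i j : Fin M, i ≤ j → (lam' j : ℕ) ≤ (lam' i : ℕ) := by
      have h1 := (Finset.mem_product.1 (Finset.mem_product.1 hb).1).1
      rw [Finset.mem_filter] at h1; exact h1.2
    have hc : ∀ i : Fin M, dcS lam (τ₁ i) = dcS lam' (τ₁' i) := by
      intro i
      have := Equiv.ext_iff.1 h (Fin.castAdd N i)
      rwa [dcBuild_castAdd hlam, dcBuild_castAdd hlam'] at this
    have hd : ∀ j : Fin N, dcT lam (τ₂ j) = dcT lam' (τ₂' j) := by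
      intro j
      have := Equiv.ext_iff.1 h (Fin.natAdd M j)
      rwa [dcBuild_natAdd hlam, dcBuild_natAdd hlam'] at this
    have himg : Finset.univ.image (dcS lam) = Finset.univ.image (dcS lam') := by
      ext t
      simp only [Finset.mem_image, Finset.mem_univ, true_and]
      constructor
      · rintro ⟨k, rfl⟩
        exact ⟨τ₁' (τ₁.symm k), by rw [← hc (τ₁.symm k), Equiv.apply_symm_apply]⟩
      · rintro ⟨k, rfl⟩
        exact ⟨τ₁ (τ₁'.symm k), by rw [hc (τ₁'.symm k), Equiv.apply_symm_apply]⟩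
    have hll : lam = lam' := dcS_eq_of_image_eq hlam hlam' himg
    subst hll
    have ht1 : τ₁ = τ₁' := Equiv.ext fun i => (dcS_strictMono hlam).injective (hc i)
    have ht2 : τ₂ = τ₂' := Equiv.ext fun j => (dcT_strictMono (lam := lam)).injective (hd j)
    rw [ht1, ht2]
  case surj =>
    intro σ _
    set S : Finset (Fin (M+N)) := Finset.univ.image (fun i : Fin M => σ (Fin.castAdd N i))
      with hSdef
    have hScard : S.card = M := by
      rw [hSdef, Finset.card_image_of_injective _
        (show Function.Injective (fun i : Fin M => σ (Fin.castAdd N i)) from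
          fun u v h => (Fin.strictMono_castAdd N).injective (σ.injective h))]
      simp
    have hgmono := (S.orderEmbOfFin hScard).strictMono
    have hgle : ∀ k : Fin M, (k : ℕ) ≤ S.orderEmbOfFin hScard k :=
      fun k => dc_le_apply hgmono k
    have hgub : ∀ k : Fin M, (S.orderEmbOfFin hScard k : ℕ) ≤ N + k := by
      intro k
      have hM : 0 < M := k.pos
      have hk := k.isLt
      have h1 := dc_strictMono_add_le hgmono k ⟨M-1, by omega⟩
        (by show (k:ℕ) ≤ M - 1; omega)
      have h2 := (S.orderEmbOfFin hScard ⟨M-1, by omega⟩).isLt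
      have h3 : ((⟨M-1, by omega⟩ : Fin M) : ℕ) = M - 1 := rfl
      omega
    set lam : Fin M → Fin (N+1) := fun i =>
      ⟨(S.orderEmbOfFin hScard i.rev : ℕ) - i.rev,
        by have := hgub i.rev; have := hgle i.rev; omega⟩ with hlamdef
    have hlam : ∀ i j : Fin M, i ≤ j → (lam j : ℕ) ≤ (lam i : ℕ) := by
      intro i j hij
      have hr : (j.rev : ℕ) ≤ i.rev := Fin.rev_le_rev.2 hij
      have h1 := dc_strictMono_add_le hgmono j.rev i.rev hr
      have h2 := hgle j.rev
      show (S.orderEmbOfFin hScard j.rev : ℕ) - j.rev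
        ≤ (S.orderEmbOfFin hScard i.rev : ℕ) - i.rev
      omega
    have hSg : ∀ k : Fin M, dcS lam k = S.orderEmbOfFin hScard k := by
      intro k
      apply Fin.ext
      show (lam k.rev : ℕ) + (k : ℕ) = _
      rw [hlamdef]
      show (S.orderEmbOfFin hScard k.rev.rev : ℕ) - (k.rev.rev : ℕ) + (k : ℕ) = _
      rw [Fin.rev_rev]
      have := hgle k
      omega
    have himg : Finset.univ.image (dcS lam) = S := by
      ext t
      constructor
      · intro ht
        rw [Finset.mem_image] at ht
        obtain ⟨k, _, rfl⟩ := ht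
        rw [hSg k]
        exact Finset.orderEmbOfFin_mem S hScard k
      · intro ht
        have : t ∈ Set.range ⇑(S.orderEmbOfFin hScard) := by
          rw [Finset.range_orderEmbOfFin]
          exact ht
        obtain ⟨k, hk⟩ := this
        rw [Finset.mem_image]
        exact ⟨k, Finset.mem_univ k, by rw [hSg k, hk]⟩
    have hTcard : (Sᶜ).card = N := by
      rw [Finset.card_compl, hScard]
      simp
    have hmemT : ∀ j : Fin N, σ (Fin.natAdd M j) ∈ Sᶜ := by
      intro j
      rw [Finset.mem_compl, hSdef, Finset.mem_image]
      rintro ⟨i, -, hi⟩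
      have := σ.injective hi
      have hv : (i : ℕ) = M + j := by
        rw [Fin.ext_iff] at this
        exact this
      have := i.isLt
      omega
    set τ₁ : Equiv.Perm (Fin M) := Equiv.ofBijective
      (fun i => (S.orderIsoOfFin hScard).symm
        ⟨σ (Fin.castAdd N i), Finset.mem_image_of_mem _ (Finset.mem_univ i)⟩)
      (Finite.injective_iff_bijective.1 (by
        intro u v huv
        have h2 := congrArg (fun w => ((S.orderIsoOfFin hScard) w : Fin (M+N))) huv
        simp only [OrderIso.apply_symm_apply] at h2
        exact (Fin.strictMono_castAdd N).injective (σ.injective h2))) with ht1def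
    set τ₂ : Equiv.Perm (Fin N) := Equiv.ofBijective
      (fun j => ((Sᶜ).orderIsoOfFin hTcard).symm
        ⟨σ (Fin.natAdd M j), hmemT j⟩)
      (Finite.injective_iff_bijective.1 (by
        intro u v huv
        have h2 := congrArg (fun w => (((Sᶜ).orderIsoOfFin hTcard) w : Fin (M+N))) huv
        simp only [OrderIso.apply_symm_apply] at h2
        have h3 : Fin.natAdd M u = Fin.natAdd M v := σ.injective h2
        rw [Fin.ext_iff] at h3 ⊢
        have : M + (u:ℕ) = M + v := h3
        omega)) with ht2def
    refine ⟨((lam, τ₁), τ₂), ?_, ?_⟩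
    · refine Finset.mem_product.2 ⟨Finset.mem_product.2 ⟨?_, Finset.mem_univ _⟩,
        Finset.mem_univ _⟩
      rw [Finset.mem_filter]
      exact ⟨Finset.mem_univ _, hlam⟩
    · apply Equiv.ext
      intro r
      refine Fin.addCases ?_ ?_ r
      · intro i
        rw [dcBuild_castAdd hlam, hSg]
        rw [← Finset.coe_orderIsoOfFin_apply]
        show (((S.orderIsoOfFin hScard) ((S.orderIsoOfFin hScard).symm
          ⟨σ (Fin.castAdd N i), _⟩)) : Fin (M+N)) = _
        rw [OrderIso.apply_symm_apply]
      · intro j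
        rw [dcBuild_natAdd hlam]
        rw [dcT_eq_orderEmbOfFin hlam himg hTcard]
        show ((Sᶜ).orderEmbOfFin hTcard) (τ₂ j) = σ (Fin.natAdd M j)
        rw [← Finset.coe_orderIsoOfFin_apply]
        show ((((Sᶜ).orderIsoOfFin hTcard) (((Sᶜ).orderIsoOfFin hTcard).symm
          ⟨σ (Fin.natAdd M j), _⟩)) : Fin (M+N)) = _
        rw [OrderIso.apply_symm_apply]

end laplace
/-- Dual Cauchy identity for generalized (monic degree-graded) Schur-type determinants:
`Δ(y) Δ(x) ∏ᵢ∏ⱼ (yⱼ - xᵢ) = ∑_λ (-1)^{|λ|} s̃_λ(x) s̃_{λ†}(y)`. -/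
theorem dual_cauchy_tilde {R : Type*} [CommRing R] (M N : ℕ) (p : ℕ → Polynomial R)
    (hmonic : ∀ n, (p n).Monic) (hdeg : ∀ n, (p n).natDegree = n)
    (x : Fin M → R) (y : Fin N → R) :
    (∏ i : Fin N, ∏ j ∈ Finset.Ioi i, (y i - y j)) *
        (∏ i : Fin M, ∏ j ∈ Finset.Ioi i, (x i - x j)) *
        ∏ i : Fin M, ∏ j : Fin N, (y j - x i) =
      ∑ lam ∈ Finset.univ.filter
          (fun lam : Fin M → Fin (N + 1) => ∀ i j : Fin M, i ≤ j → (lam j : ℕ) ≤ (lam i : ℕ)),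
        (-1 : R) ^ (∑ i : Fin M, (lam i : ℕ)) *
          (Matrix.of fun i j : Fin M =>
            (p ((lam i : ℕ) + (M - 1 - (i : ℕ)))).eval (x j)).det *
          (Matrix.of fun i j : Fin N =>
            (p ((Finset.univ.filter
                  (fun k : Fin M => (i : ℕ) + 1 ≤ N - (lam k : ℕ))).card
              + (N - 1 - (i : ℕ)))).eval (y j)).det := by
  set x' : Fin M → R := x ∘ Fin.rev with hx'
  set y' : Fin N → R := y ∘ Fin.rev with hy'
  set z : Fin (M+N) → R := Fin.append x' y' with hz
  -- Step A : reorient the difference products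
  have hY : (∏ i : Fin N, ∏ j ∈ Finset.Ioi i, (y i - y j))
      = ∏ i : Fin N, ∏ j ∈ Finset.Ioi i, (y' j - y' i) :=
    dc_rev_pair (fun i j => y i - y j)
  have hX : (∏ i : Fin M, ∏ j ∈ Finset.Ioi i, (x i - x j))
      = ∏ i : Fin M, ∏ j ∈ Finset.Ioi i, (x' j - x' i) :=
    dc_rev_pair (fun i j => x i - x j)
  have hC : (∏ i : Fin M, ∏ j : Fin N, (y j - x i))
      = ∏ i : Fin M, ∏ j : Fin N, (y' j - x' i) := by
    rw [← Equiv.prod_comp Fin.revPerm (fun i => ∏ j : Fin N, (y j - x i))]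
    apply Finset.prod_congr rfl
    intro i _
    rw [← Equiv.prod_comp Fin.revPerm (fun j => (y j - x (Fin.revPerm i)))]
    rfl
  -- Step B : LHS is the big Vandermonde determinant
  have hsplit := dc_pair_split M N (fun i j => z j - z i)
  have hzx : ∀ i : Fin M, z (Fin.castAdd N i) = x' i := fun i => Fin.append_left x' y' i
  have hzy : ∀ j : Fin N, z (Fin.natAdd M j) = y' j := fun j => Fin.append_right x' y' j
  have hLHS : (∏ i : Fin N, ∏ j ∈ Finset.Ioi i, (y i - y j)) *
        (∏ i : Fin M, ∏ j ∈ Finset.Ioi i, (x i - x j)) *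
        ∏ i : Fin M, ∏ j : Fin N, (y j - x i)
      = ∏ i : Fin (M+N), ∏ j ∈ Finset.Ioi i, (z j - z i) := by
    rw [hY, hX, hC, hsplit]
    simp only [hzx, hzy]
    ring
  rw [hLHS]
  -- determinant of the generalized Vandermonde matrix
  have hvdm : (∏ i : Fin (M+N), ∏ j ∈ Finset.Ioi i, (z j - z i))
      = (Matrix.of fun i j : Fin (M+N) => (p (j : ℕ)).eval (z i)).det := by
    rw [← Matrix.det_vandermonde]
    exact Matrix.det_eval_matrixOfPolynomials_eq_det_vandermonde z
      (fun c => p (c : ℕ)) (fun c => hdeg c) (fun c => hmonic c)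
  rw [hvdm]
  have htrans : (Matrix.of fun i j : Fin (M+N) => (p (j : ℕ)).eval (z i)).det
      = ∑ σ : Equiv.Perm (Fin (M+N)), ((Equiv.Perm.sign σ : ℤ) : R) *
          ∏ r : Fin (M+N), (p ((σ r : ℕ))).eval (z r) := by
    rw [← Matrix.det_transpose, Matrix.det_apply']
    apply Finset.sum_congr rfl
    intro σ _
    congr 1
  rw [htrans, dc_laplace p x' y']
  -- Step C : term-by-term identification
  apply Finset.sum_congr rfl
  intro lam hmem
  rw [Finset.mem_filter] at hmem
  have hlam := hmem.2
  have eX : (Matrix.of fun i j : Fin M => (p ((dcS lam i : ℕ))).eval (x' j)).det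
      = (Matrix.of fun i j : Fin M =>
          (p ((lam i : ℕ) + (M - 1 - (i : ℕ)))).eval (x j)).det := by
    rw [← Matrix.det_submatrix_equiv_self Fin.revPerm
      (Matrix.of fun i j : Fin M => (p ((lam i : ℕ) + (M - 1 - (i : ℕ)))).eval (x j))]
    congr 1
    ext i j
    simp only [Matrix.submatrix_apply, Matrix.of_apply]
    have hrev : ((Fin.revPerm i : Fin M) : ℕ) = M - 1 - (i : ℕ) := by
      simp [Fin.val_rev]
      omega
    have hexp : (lam (Fin.rev i) : ℕ) + (M - 1 - ((Fin.rev i) : ℕ)) = (dcS lam i : ℕ) := by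
      show _ = (lam i.rev : ℕ) + (i : ℕ)
      have h1 := i.isLt
      rw [Fin.val_rev]
      omega
    show (p ((dcS lam i : ℕ))).eval (x' j) = _
    rw [← hexp]
    rfl
  have eY : (Matrix.of fun i j : Fin N => (p ((dcT lam i : ℕ))).eval (y' j)).det
      = (Matrix.of fun i j : Fin N =>
          (p ((Finset.univ.filter
                (fun k : Fin M => (i : ℕ) + 1 ≤ N - (lam k : ℕ))).card
            + (N - 1 - (i : ℕ)))).eval (y j)).det := by
    rw [← Matrix.det_submatrix_equiv_self Fin.revPerm
      (Matrix.of fun i j : Fin N =>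
        (p ((Finset.univ.filter
              (fun k : Fin M => (i : ℕ) + 1 ≤ N - (lam k : ℕ))).card
          + (N - 1 - (i : ℕ)))).eval (y j))]
    congr 1
    ext i j
    simp only [Matrix.submatrix_apply, Matrix.of_apply]
    have hfilter : (Finset.univ.filter
        (fun k : Fin M => ((Fin.rev i : Fin N) : ℕ) + 1 ≤ N - (lam k : ℕ))).card
        = dcNu lam (i : ℕ) := by
      unfold dcNu
      congr 1
      apply Finset.filter_congr
      intro k _
      have h1 := i.isLt
      have h2 := (lam k).isLt
      rw [Fin.val_rev]
      constructor <;> intro h <;> omega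
    have hexp : (Finset.univ.filter
        (fun k : Fin M => ((Fin.rev i : Fin N) : ℕ) + 1 ≤ N - (lam k : ℕ))).card
        + (N - 1 - ((Fin.rev i) : ℕ)) = (dcT lam i : ℕ) := by
      rw [hfilter]
      show _ = (i : ℕ) + dcNu lam (i : ℕ)
      have h1 := i.isLt
      rw [Fin.val_rev]
      omega
    show (p ((dcT lam i : ℕ))).eval (y' j) = _
    rw [← hexp]
    rfl
  rw [eX, eY]
end

section
/- For the falling-factorial sequence, the analogue of the elementary symmetric polynomial admits the explicit expansion: e^{\Delta^+}_k(x_1,...,x_N) = \sum_{1 \leq i_1 < \cdots < i_k \leq N} (x_{i_1} - N + k - 1 + i_1)(x_{i_2} - N + k - 2 + i_2) \cdots (x_{i_k} - N + i_k), where e^{\Delta^+}_k(x_1,...,x_N) = \det( p_{\mu_i + N - i}(x_j) ) / \det( p_{N-i}(x_j) ) with p_n(x) = x^{\underline{n}} the falling factorial and \mu = (1^k, 0^{N-k}). -/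
open Finset Matrix Polynomial

section Aux
variable {R : Type*} [CommRing R]

/-- The sum appearing in the statement. -/
def Fsum (N k : ℕ) (x : Fin N → R) : R :=
  ∑ S : {S : Finset (Fin N) // S.card = k},
    ∏ a : Fin k,
      (x (S.1.orderEmbOfFin S.2 a) + (k : R) - (N : R) - ((a : ℕ) : R)
        + (((S.1.orderEmbOfFin S.2 a : Fin N) : ℕ) : R))

def Vdm (N : ℕ) (x : Fin N → R) : R := ∏ i : Fin N, ∏ j ∈ Finset.Ioi i, (x i - x j)

lemma Fsum_zero (N : ℕ) (x : Fin N → R) : Fsum N 0 x = 1 := by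
  haveI : Unique {S : Finset (Fin N) // S.card = 0} :=
    ⟨⟨⟨∅, rfl⟩⟩, by rintro ⟨S, hS⟩; ext : 1; simpa using Finset.card_eq_zero.mp hS⟩
  rw [Fsum, Fintype.sum_unique]
  simp

lemma Fsum_of_lt (N k : ℕ) (h : N < k) (x : Fin N → R) : Fsum N k x = 0 := by
  haveI : IsEmpty {S : Finset (Fin N) // S.card = k} := by
    constructor; rintro ⟨S, hS⟩
    have := S.card_le_univ
    simp only [hS, Finset.card_univ, Fintype.card_fin] at this
    omega
  rw [Fsum, Finset.univ_eq_empty, Finset.sum_empty]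

end Aux

section FsumRec
variable {R : Type*} [CommRing R]

/-- non-dependent version of the summand -/
def Fterm (M c : ℕ) (x : Fin M → R) (S : Finset (Fin M)) : R :=
  if h : S.card = c then
    ∏ a : Fin c,
      (x (S.orderEmbOfFin h a) + (c : R) - (M : R) - ((a : ℕ) : R)
        + (((S.orderEmbOfFin h a : Fin M) : ℕ) : R))
  else 0

lemma Fsum_eq_sum_powersetCard (M c : ℕ) (x : Fin M → R) :
    Fsum M c x = ∑ S ∈ Finset.powersetCard c Finset.univ, Fterm M c x S := by
  rw [Fsum, Finset.sum_subtype (Finset.powersetCard c Finset.univ)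
      (fun S => Finset.mem_powersetCard_univ) (Fterm M c x)]
  exact Finset.sum_congr rfl fun S _ => by rw [Fterm, dif_pos S.2]

lemma Fterm_map (N c : ℕ) (x : Fin (N+1) → R) (T : Finset (Fin N)) (hT : T.card = c) :
    Fterm (N+1) c x (T.map ⟨Fin.succ, Fin.succ_injective _⟩) = Fterm N c (x ∘ Fin.succ) T := by
  have hmap : (T.map ⟨Fin.succ, Fin.succ_injective _⟩).card = c := by rw [Finset.card_map, hT]
  have hemb : (fun a => ((T.orderEmbOfFin hT a).succ : Fin (N+1)))
      = (T.map ⟨Fin.succ, Fin.succ_injective _⟩).orderEmbOfFin hmap := by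
    apply Finset.orderEmbOfFin_unique
    · intro a
      exact Finset.mem_map_of_mem _ (Finset.orderEmbOfFin_mem T hT a)
    · intro a b hab
      simpa [Fin.succ_lt_succ_iff] using (T.orderEmbOfFin hT).strictMono hab
  rw [Fterm, Fterm, dif_pos hmap, dif_pos hT]
  refine Finset.prod_congr rfl fun a _ => ?_
  rw [← hemb]
  simp only [Function.comp_apply, Fin.val_succ]
  push_cast
  ring

lemma Fterm_insert (N c : ℕ) (x : Fin (N+1) → R) (T : Finset (Fin N)) (hT : T.card = c) :
    Fterm (N+1) (c+1) x (insert 0 (T.map ⟨Fin.succ, Fin.succ_injective _⟩))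
      = (x 0 + ((c : R) + 1) - ((N : R) + 1)) * Fterm N c (x ∘ Fin.succ) T := by
  have h0 : (0 : Fin (N+1)) ∉ T.map ⟨Fin.succ, Fin.succ_injective _⟩ := by
    simp [Finset.mem_map, Fin.succ_ne_zero]
  have hS : (insert 0 (T.map ⟨Fin.succ, Fin.succ_injective _⟩)).card = c + 1 := by
    rw [Finset.card_insert_of_notMem h0, Finset.card_map, hT]
  have hemb : (Fin.cons 0 (fun a => ((T.orderEmbOfFin hT a).succ : Fin (N+1))) :
        Fin (c+1) → Fin (N+1))
      = (insert 0 (T.map ⟨Fin.succ, Fin.succ_injective _⟩)).orderEmbOfFin hS := by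
    apply Finset.orderEmbOfFin_unique
    · intro a
      refine Fin.cases ?_ (fun b => ?_) a
      · simp
      · rw [Fin.cons_succ]
        exact Finset.mem_insert_of_mem
          (Finset.mem_map_of_mem _ (Finset.orderEmbOfFin_mem T hT b))
    · intro a b hab
      rcases Fin.eq_zero_or_eq_succ b with rfl | ⟨b', rfl⟩
      · exact absurd hab (Fin.not_lt_zero _)
      · rcases Fin.eq_zero_or_eq_succ a with rfl | ⟨a', rfl⟩
        · rw [Fin.cons_zero, Fin.cons_succ]
          exact Fin.succ_pos _
        · rw [Fin.cons_succ, Fin.cons_succ, Fin.succ_lt_succ_iff]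
          exact (T.orderEmbOfFin hT).strictMono (Fin.succ_lt_succ_iff.mp hab)
  rw [Fterm, Fterm, dif_pos hS, dif_pos hT, ← hemb, Fin.prod_univ_succ]
  congr 1
  · rw [Fin.cons_zero]
    simp only [Fin.val_zero, Nat.cast_zero]
    push_cast
    ring
  · refine Finset.prod_congr rfl fun a _ => ?_
    rw [Fin.cons_succ]
    simp only [Function.comp_apply, Fin.val_succ]
    push_cast
    ring

lemma Fsum_succ (N k : ℕ) (x : Fin (N+1) → R) :
    Fsum (N+1) (k+1) x =
      Fsum N (k+1) (x ∘ Fin.succ)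
        + (x 0 + ((k : R) + 1) - ((N : R) + 1)) * Fsum N k (x ∘ Fin.succ) := by
  have h0 : (0 : Fin (N+1)) ∉ (Finset.univ : Finset (Fin N)).map ⟨Fin.succ, Fin.succ_injective _⟩ := by
    simp [Finset.mem_map, Fin.succ_ne_zero]
  rw [Fsum_eq_sum_powersetCard, Fin.univ_succ, Finset.cons_eq_insert,
    Finset.powersetCard_succ_insert h0, Finset.sum_union]
  · rw [Finset.powersetCard_map, Finset.sum_map, Finset.sum_image, Finset.powersetCard_map,
      Finset.sum_map]
    · congr 1
      · rw [Fsum_eq_sum_powersetCard]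
        refine Finset.sum_congr rfl fun T hT => ?_
        exact Fterm_map N (k+1) x T (Finset.mem_powersetCard_univ.mp hT)
      · rw [Fsum_eq_sum_powersetCard, Finset.mul_sum]
        refine Finset.sum_congr rfl fun T hT => ?_
        exact Fterm_insert N k x T (Finset.mem_powersetCard_univ.mp hT)
    · intro a ha b hb hab
      have ha' : (0 : Fin (N+1)) ∉ a := fun h => by
        have := (Finset.mem_powersetCard.mp ha).1 h
        exact h0 this
      have hb' : (0 : Fin (N+1)) ∉ b := fun h => by
        have := (Finset.mem_powersetCard.mp hb).1 h
        exact h0 this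
      rw [← Finset.erase_insert ha', ← Finset.erase_insert hb', hab]
  · rw [Finset.disjoint_left]
    intro S hS hS'
    have h1 : (0 : Fin (N+1)) ∉ S := fun h => h0 ((Finset.mem_powersetCard.mp hS).1 h)
    obtain ⟨T, _, rfl⟩ := Finset.mem_image.mp hS'
    exact h1 (Finset.mem_insert_self _ _)

end FsumRec

section DetTools
variable {R : Type*} [CommRing R]

lemma Vdm_succ (N : ℕ) (x : Fin (N+1) → R) :
    Vdm (N+1) x = (∏ j : Fin N, (x 0 - x j.succ)) * Vdm N (x ∘ Fin.succ) := by
  rw [Vdm, Fin.prod_univ_succ, Fin.prod_Ioi_zero]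
  congr 1
  rw [Vdm]
  exact Finset.prod_congr rfl fun i _ => by rw [Fin.prod_Ioi_succ]; rfl

lemma det_row_op {n : ℕ} (M : Matrix (Fin (n+1)) (Fin (n+1)) R) (d : Fin (n+1) → R) :
    (Matrix.of fun i j =>
        M i j + (if h : (i:ℕ)+1 < n+1 then d i * M ⟨(i:ℕ)+1, h⟩ j else 0)).det = M.det := by
  set L : Matrix (Fin (n+1)) (Fin (n+1)) R :=
    Matrix.of fun i j => if i = j then 1 else if ((j:ℕ) = (i:ℕ)+1) then d i else 0 with hLdef
  have hL : L.BlockTriangular id := by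
    intro i j hij
    have h1 : i ≠ j := by intro h; subst h; exact absurd hij (lt_irrefl _)
    have h2 : (j:ℕ) ≠ (i:ℕ)+1 := by
      have : (j:ℕ) < (i:ℕ) := hij
      omega
    simp only [hLdef, Matrix.of_apply, if_neg h1, if_neg h2]
  have hdet : L.det = 1 := by
    rw [Matrix.det_of_upperTriangular hL]
    simp [hLdef]
  have hprod : (Matrix.of fun i j =>
      M i j + (if h : (i:ℕ)+1 < n+1 then d i * M ⟨(i:ℕ)+1, h⟩ j else 0)) = L * M := by
    ext i j
    rw [Matrix.mul_apply]
    have : ∀ l : Fin (n+1), L i l * M l j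
        = (if l = i then M l j else 0) + (if (l:ℕ) = (i:ℕ)+1 then d i * M l j else 0) := by
      intro l
      by_cases h1 : l = i
      · subst h1
        have : ¬ ((l:ℕ) = (l:ℕ)+1) := by omega
        simp [hLdef, this]
      · by_cases h2 : (l:ℕ) = (i:ℕ)+1
        · have : ¬ (i = l) := by
            intro h; subst h; omega
          simp [hLdef, this, h1, h2]
        · simp only [hLdef, Matrix.of_apply, if_neg h2, if_neg (fun h : i = l => h1 h.symm),
            zero_mul, if_neg h1, add_zero]
    simp_rw [this]
    rw [Finset.sum_add_distrib, Finset.sum_ite_eq' Finset.univ i (fun l => M l j)]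
    simp only [Finset.mem_univ, if_true, Matrix.of_apply]
    congr 1
    by_cases h : (i:ℕ)+1 < n+1
    · have hcond : ∀ l : Fin (n+1), ((l:ℕ) = (i:ℕ)+1) ↔ l = (⟨(i:ℕ)+1, h⟩ : Fin (n+1)) := by
        intro l; rw [Fin.ext_iff]
      simp_rw [hcond]
      rw [Finset.sum_ite_eq' Finset.univ (⟨(i:ℕ)+1, h⟩ : Fin (n+1))
        (fun l => d i * M l j), dif_pos h]
      simp
    · rw [dif_neg h]
      symm
      apply Finset.sum_eq_zero
      intro l _
      rw [if_neg]
      have := l.isLt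
      omega
  rw [hprod, Matrix.det_mul, hdet, one_mul]

end DetTools
section Main
variable {R : Type*} [CommRing R]

lemma pev_succ (n : ℕ) (t : R) :
    (descPochhammer R (n+1)).eval t = (descPochhammer R n).eval t * (t - (n : R)) := by
  rw [descPochhammer_succ_right]
  simp [Polynomial.eval_mul]

lemma key : ∀ (N k : ℕ), k ≤ N → ∀ (x : Fin N → R),
    (Matrix.of fun i j : Fin N =>
        (descPochhammer R ((if (i : ℕ) < k then 1 else 0) + (N - 1 - (i : ℕ)))).eval (x j)).det
      = Vdm N x * Fsum N k x := by
  intro N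
  induction N with
  | zero =>
    intro k hk x
    have hk0 : k = 0 := Nat.le_zero.mp hk
    subst hk0
    rw [Matrix.det_isEmpty, Fsum_zero, Vdm]
    simp
  | succ N ih =>
    intro k hk x
    set x' : Fin N → R := x ∘ Fin.succ with hx'
    set γ : R := x 0 + (k : R) - (N : R) - 1 with hγ
    set M : Matrix (Fin (N+1)) (Fin (N+1)) R := Matrix.of fun i j : Fin (N+1) =>
      (descPochhammer R ((if (i : ℕ) < k then 1 else 0) + (N + 1 - 1 - (i : ℕ)))).eval (x j)
      with hM
    set Q : ℕ → R → R := fun i t =>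
      (descPochhammer R (if i < k then N - i else N - 1 - i)).eval t
        + (if i + 1 = k then γ * (descPochhammer R (N - k)).eval t else 0) with hQ
    set d : Fin (N+1) → R := fun i =>
      if (i : ℕ) + 1 = k then -((x 0 - ((N - k : ℕ) : R)) * (x 0 - ((N - k : ℕ) : R) - 1))
      else -(x 0 - (((if (i : ℕ) + 1 < k then N - (i : ℕ) else N - 1 - (i : ℕ)) : ℕ) : R))
      with hd
    set M' : Matrix (Fin (N+1)) (Fin (N+1)) R := Matrix.of fun i j : Fin (N+1) =>
      if (i : ℕ) < N then (x j - x 0) * Q (i : ℕ) (x j)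
      else (descPochhammer R (if N < k then 1 else 0)).eval (x j) with hM'
    have step2 : (Matrix.of fun i j =>
        M i j + (if h : (i:ℕ)+1 < N+1 then d i * M ⟨(i:ℕ)+1, h⟩ j else 0)) = M' := by
      ext i j
      simp only [Matrix.of_apply, hM', hM, hd]
      by_cases hiN : (i : ℕ) < N
      · rw [if_pos hiN, dif_pos (by omega)]
        by_cases hgap : (i : ℕ) + 1 = k
        · have hik : (i : ℕ) < k := by omega
          have hkN : k ≤ N := by omega
          have e1 : (if (i:ℕ) < k then 1 else 0) + (N + 1 - 1 - (i:ℕ)) = (N - k) + 1 + 1 := by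
            rw [if_pos hik]; omega
          have e2 : (if ((⟨(i:ℕ)+1, by omega⟩ : Fin (N+1)) : ℕ) < k then 1 else 0)
              + (N + 1 - 1 - ((⟨(i:ℕ)+1, by omega⟩ : Fin (N+1)) : ℕ)) = N - k := by
            simp only [Fin.val_mk]
            rw [if_neg (by omega)]; omega
          have e3 : (if (i:ℕ) < k then N - (i:ℕ) else N - 1 - (i:ℕ)) = (N - k) + 1 := by
            rw [if_pos hik]; omega
          rw [e1, e2, if_pos hgap, hQ]
          simp only [e3, if_pos hgap, if_pos hgap]
          rw [pev_succ, pev_succ]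
          rw [hγ]
          push_cast [Nat.cast_sub hkN]
          ring
        · set m : ℕ := if (i:ℕ) + 1 < k then N - (i:ℕ) else N - 1 - (i:ℕ) with hm
          have e1 : (if (i:ℕ) < k then 1 else 0) + (N + 1 - 1 - (i:ℕ)) = m + 1 := by
            rw [hm]; split_ifs <;> omega
          have e2 : (if ((⟨(i:ℕ)+1, by omega⟩ : Fin (N+1)) : ℕ) < k then 1 else 0)
              + (N + 1 - 1 - ((⟨(i:ℕ)+1, by omega⟩ : Fin (N+1)) : ℕ)) = m := by
            simp only [Fin.val_mk]
            rw [hm]; split_ifs <;> omega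
          have e3 : (if (i:ℕ) < k then N - (i:ℕ) else N - 1 - (i:ℕ)) = m := by
            rw [hm]; split_ifs <;> omega
          rw [e1, e2, if_neg hgap, hQ]
          simp only [e3, if_neg hgap, add_zero]
          rw [pev_succ]
          ring
      · have hiN' : (i : ℕ) = N := by omega
        rw [if_neg hiN, dif_neg (by omega), add_zero]
        simp only [hiN', Nat.add_sub_cancel, Nat.sub_self, add_zero]
    have step1 : M.det = M'.det := by rw [← det_row_op M d, step2]
    set B : Matrix (Fin N) (Fin N) R := Matrix.of fun i j : Fin N => Q (i : ℕ) (x' j) with hB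
    have step3 : M'.det = (-1)^N * (descPochhammer R (if N < k then 1 else 0)).eval (x 0)
        * ((∏ j : Fin N, (x j.succ - x 0)) * B.det) := by
      rw [Matrix.det_succ_column_zero]
      rw [Fintype.sum_eq_single (Fin.last N) ?side]
      case side =>
        intro i hi
        have hiN : (i : ℕ) < N := by
          have := i.isLt
          have : (i : ℕ) ≠ N := fun h => hi (Fin.ext h)
          omega
        have : M' i 0 = 0 := by
          simp only [hM', Matrix.of_apply, if_pos hiN]
          ring
        rw [this]
        ring
      have hlast : M' (Fin.last N) 0
          = (descPochhammer R (if N < k then 1 else 0)).eval (x 0) := by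
        simp only [hM', Matrix.of_apply, Fin.val_last]
        rw [if_neg (lt_irrefl N)]
      have hsub : M'.submatrix (Fin.last N).succAbove Fin.succ
          = Matrix.of fun i j : Fin N => (x j.succ - x 0) * B i j := by
        ext i j
        simp only [Matrix.submatrix_apply, Fin.succAbove_last, hM', hB, Matrix.of_apply,
          Fin.coe_castSucc, if_pos i.isLt]
        rfl
      rw [hlast, hsub, Matrix.det_mul_row, Fin.val_last]
    -- now compute B.det according to k
    rcases Nat.lt_or_ge k (N+1) with hkN | hkN'
    · -- k ≤ N
      have hkN : k ≤ N := by omega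
      have hc0 : (descPochhammer R (if N < k then 1 else 0)).eval (x 0) = 1 := by
        rw [if_neg (by omega), descPochhammer_zero, Polynomial.eval_one]
      rcases k with _ | k'
      · -- k = 0
        have hBeq : B = Matrix.of fun i j : Fin N =>
            (descPochhammer R ((if (i : ℕ) < 0 then 1 else 0) + (N - 1 - (i : ℕ)))).eval (x' j) := by
          ext i j
          simp only [hB, Matrix.of_apply, hQ]
          rw [if_neg (by omega), if_neg (by omega)]
          simp
        have hdetB : B.det = Vdm N x' * Fsum N 0 x' := by rw [hBeq]; exact ih 0 (by omega) x'
        rw [step1, step3, hc0, hdetB, Vdm_succ, Fsum_zero, Fsum_zero]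
        have hsign : (∏ j : Fin N, (x 0 - x j.succ))
            = (-1 : R)^N * ∏ j : Fin N, (x j.succ - x 0) := by
          rw [show (fun j : Fin N => x 0 - x j.succ) = fun j : Fin N => (-1) * (x j.succ - x 0)
            from funext fun j => by ring, Finset.prod_mul_distrib, Finset.prod_const,
            Finset.card_univ, Fintype.card_fin]
        rw [hsign]
        ring
      · -- k = k'+1, k ≤ N
        have hk'N : k' < N := by omega
        set g : Fin N := ⟨k', hk'N⟩ with hg
        have hgval : (g : ℕ) = k' := rfl
        set B1 : Matrix (Fin N) (Fin N) R := Matrix.of fun i j : Fin N =>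
          (descPochhammer R ((if (i : ℕ) < k'+1 then 1 else 0) + (N - 1 - (i : ℕ)))).eval (x' j)
          with hB1
        set B2 : Matrix (Fin N) (Fin N) R := Matrix.of fun i j : Fin N =>
          (descPochhammer R ((if (i : ℕ) < k' then 1 else 0) + (N - 1 - (i : ℕ)))).eval (x' j)
          with hB2
        have hBeq : B = B1.updateRow g (B1 g + γ • B2 g) := by
          ext i j
          rw [Matrix.updateRow_apply]
          by_cases hig : i = g
          · subst hig
            rw [if_pos rfl]
            simp only [hB, hB1, hB2, Matrix.of_apply, hQ, Pi.add_apply, Pi.smul_apply,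
              smul_eq_mul, hgval]
            simp only [if_true, if_neg (lt_irrefl k'), if_pos (Nat.lt_succ_self k')]
            have n1 : 1 + (N - 1 - k') = N - k' := by omega
            have n2 : 0 + (N - 1 - k') = N - (k'+1) := by omega
            rw [n1, n2]
          · rw [if_neg hig]
            have hig' : (i : ℕ) ≠ k' := fun h => hig (Fin.ext h)
            simp only [hB, hB1, Matrix.of_apply, hQ]
            have c2 : ((if (i:ℕ) + 1 = k'+1 then γ * (descPochhammer R (N - (k'+1))).eval (x' j)
                else 0) : R) = 0 := if_neg (by omega)
            rw [c2, add_zero]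
            have c1 : (if (i:ℕ) < k'+1 then N - (i:ℕ) else N - 1 - (i:ℕ))
                = (if (i:ℕ) < k'+1 then 1 else 0) + (N - 1 - (i:ℕ)) := by
              have := i.isLt
              split_ifs <;> omega
            rw [c1]
        have hB2' : B1.updateRow g (B2 g) = B2 := by
          ext i j
          rw [Matrix.updateRow_apply]
          by_cases hig : i = g
          · subst hig
            rw [if_pos rfl]
          · rw [if_neg hig]
            have hig' : (i : ℕ) ≠ k' := fun h => hig (Fin.ext h)
            simp only [hB1, hB2, Matrix.of_apply]
            have c1 : (if (i:ℕ) < k'+1 then 1 else 0) = (if (i:ℕ) < k' then 1 else 0) := by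
              split_ifs <;> omega
            rw [c1]
        have hdetB : B.det = Vdm N x' * Fsum N (k'+1) x' + γ * (Vdm N x' * Fsum N k' x') := by
          rw [hBeq, Matrix.det_updateRow_add, Matrix.det_updateRow_smul, Matrix.updateRow_eq_self,
            hB2', hB1, hB2]
          rw [ih (k'+1) (by omega) x', ih k' (by omega) x']
        rw [step1, step3, hc0, hdetB, Vdm_succ, Fsum_succ]
        have hsign : (∏ j : Fin N, (x 0 - x j.succ))
            = (-1 : R)^N * ∏ j : Fin N, (x j.succ - x 0) := by
          rw [show (fun j : Fin N => x 0 - x j.succ) = fun j : Fin N => (-1) * (x j.succ - x 0)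
            from funext fun j => by ring, Finset.prod_mul_distrib, Finset.prod_const,
            Finset.card_univ, Fintype.card_fin]
        rw [hsign, hγ]
        push_cast
        ring
    · -- k = N+1
      have hkeq : k = N + 1 := by omega
      subst hkeq
      have hc0 : (descPochhammer R (if N < N+1 then 1 else 0)).eval (x 0) = x 0 := by
        rw [if_pos (by omega), descPochhammer_one, Polynomial.eval_X]
      have hBeq : B = Matrix.of fun i j : Fin N =>
          (descPochhammer R ((if (i : ℕ) < N then 1 else 0) + (N - 1 - (i : ℕ)))).eval (x' j) := by
        ext i j
        simp only [hB, Matrix.of_apply, hQ]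
        have hi := i.isLt
        have c1 : (if (i:ℕ) < N+1 then N - (i:ℕ) else N - 1 - (i:ℕ)) = 1 + (N - 1 - (i:ℕ)) := by
          rw [if_pos (by omega)]; omega
        have c2 : ((if (i:ℕ) + 1 = N+1 then γ * (descPochhammer R (N - (N+1))).eval (x' j) else 0) : R) = 0 := by
          rw [if_neg (by omega)]
        have c3 : (if (i:ℕ) < N then 1 else 0) = 1 := if_pos hi
        rw [c1, c2, add_zero, c3]
      have hdetB : B.det = Vdm N x' * Fsum N N x' := by rw [hBeq]; exact ih N le_rfl x'
      rw [step1, step3, hc0, hdetB, Vdm_succ]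
      have hFs : Fsum (N+1) (N+1) x = (x 0) * Fsum N N x' := by
        rw [Fsum_succ, Fsum_of_lt N (N+1) (by omega)]
        ring
      rw [hFs]
      have hsign : (∏ j : Fin N, (x 0 - x j.succ))
          = (-1 : R)^N * ∏ j : Fin N, (x j.succ - x 0) := by
        rw [show (fun j : Fin N => x 0 - x j.succ) = fun j : Fin N => (-1) * (x j.succ - x 0)
          from funext fun j => by ring, Finset.prod_mul_distrib, Finset.prod_const,
          Finset.card_univ, Fintype.card_fin]
      rw [hsign]
      ring

end Main

/-- Explicit expansion of the elementary symmetric analogue `e^{Δ⁺}_k` for the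
falling-factorial sequence `pₙ(x) = x(x-1)⋯(x-n+1)`, stated after multiplying both sides
by the Vandermonde determinant. -/
theorem e_forward_difference_explicit {R : Type*} [CommRing R] (N k : ℕ) (hk : k ≤ N)
    (x : Fin N → R) :
    (Matrix.of fun i j : Fin N =>
        (descPochhammer R ((if (i : ℕ) < k then 1 else 0) + (N - 1 - (i : ℕ)))).eval (x j)).det =
      (∏ i : Fin N, ∏ j ∈ Finset.Ioi i, (x i - x j)) *
        ∑ S : {S : Finset (Fin N) // S.card = k},
          ∏ a : Fin k,
            (x (S.1.orderEmbOfFin S.2 a) + (k : R) - (N : R) - ((a : ℕ) : R)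
              + (((S.1.orderEmbOfFin S.2 a : Fin N) : ℕ) : R)) := by
  have h := key N k hk x
  rw [Vdm, Fsum] at h
  exact h
end

section
/- Let {p_n} be a polynomial sequence of binomial type with associated delta operator Q (so Q p_n = n p_{n-1}), and define h_k(x_1,...,x_N) = \det(p_{\mu_i+N-i}(x_j))/\det(p_{N-i}(x_j)) with \mu = (k,0,...,0). Then for k \geq 0, the shifted function satisfies the expansion h_k(x_1+u,...,x_N+u) = \sum_{l=0}^{k} \binom{N+k-1}{k-l} h_l(x_1,...,x_N) p_{k-l}(u). -/
open Finset Matrix Polynomial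

private lemma det_updateRow_sum'' {R : Type*} [CommRing R] {n : Type*} [DecidableEq n]
    [Fintype n] (M : Matrix n n R) (i : n) {α : Type*} (s : Finset α) (v : α → n → R) :
    (M.updateRow i (∑ r ∈ s, v r)).det = ∑ r ∈ s, (M.updateRow i (v r)).det :=
  (Matrix.detRowAlternating : (n → R) [⋀^n]→ₗ[R] R).map_update_sum s i v M

/-- Expansion of the complete-homogeneous Schur-type function `h_k` for a monic binomial-type
sequence: `h_k(x₁+u, …, x_N+u) = ∑_{l=0}^k C(N+k-1, k-l) h_l(x₁,…,x_N) p_{k-l}(u)`, stated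
after multiplying both sides by the difference product, i.e. as an identity of determinants. -/
theorem expansion_of_h {F : Type*} [Field F] [CharZero F] (N : ℕ) (hN : 0 < N)
    (p : ℕ → Polynomial F)
    (hmonic : ∀ n, (p n).Monic) (hdeg : ∀ n, (p n).natDegree = n)
    (hbin : ∀ (n : ℕ) (a b : F), (p n).eval (a + b) =
      ∑ j ∈ Finset.range (n + 1), (n.choose j : F) * (p j).eval a * (p (n - j)).eval b)
    (h0 : ∀ n : ℕ, (p n).eval 0 = if n = 0 then 1 else 0)
    (k : ℕ) (x : Fin N → F) (u : F) :
    (Matrix.of fun i j : Fin N =>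
        (p ((if (i : ℕ) = 0 then k else 0) + (N - 1 - (i : ℕ)))).eval (x j + u)).det =
      ∑ l ∈ Finset.range (k + 1),
        ((N + k - 1).choose (k - l) : F) *
          (Matrix.of fun i j : Fin N =>
            (p ((if (i : ℕ) = 0 then l else 0) + (N - 1 - (i : ℕ)))).eval (x j)).det *
          (p (k - l)).eval u := by
  haveI : NeZero N := ⟨hN.ne'⟩
  have hp0 : p 0 = 1 := Polynomial.eq_one_of_monic_natDegree_zero (hmonic 0) (hdeg 0)
  -- the base matrix (rows `p_{N-1-i}(x_j)`)
  set B : Matrix (Fin N) (Fin N) F :=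
    Matrix.of (fun i j : Fin N => (p (N - 1 - (i : ℕ))).eval (x j)) with hB
  -- the matrices in the statement are row-0 updates of `B`
  have hmat : ∀ m : ℕ,
      (Matrix.of fun i j : Fin N =>
        (p ((if (i : ℕ) = 0 then m else 0) + (N - 1 - (i : ℕ)))).eval (x j))
      = B.updateRow 0 (fun j => (p (m + (N - 1))).eval (x j)) := by
    intro m
    ext i j
    by_cases h : i = 0
    · subst h
      simp [Matrix.updateRow_self]
    · have h' : (i : ℕ) ≠ 0 := fun hc => h (Fin.ext hc)
      simp [Matrix.updateRow_ne h, hB, h', h]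
  -- the unitriangular transition matrix
  set T : Matrix (Fin N) (Fin N) F :=
    Matrix.of (fun i i' : Fin N =>
      if (i : ℕ) = 0 then (if (i' : ℕ) = 0 then 1 else 0)
      else (((N - 1 - (i : ℕ)).choose (N - 1 - (i' : ℕ)) : ℕ) : F) *
        (p ((i' : ℕ) - (i : ℕ))).eval u) with hT
  have hTdet : T.det = 1 := by
    rw [Matrix.det_of_upperTriangular]
    · apply Finset.prod_eq_one
      intro i _
      by_cases h : (i : ℕ) = 0
      · simp [hT, h, Fin.val_eq_zero_iff.mp h]
      · simp [hT, h, Nat.choose_self, hp0]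
    · intro i i' hlt
      have h1 : (i' : ℕ) < (i : ℕ) := hlt
      have h2 : (i : ℕ) ≠ 0 := by omega
      have h3 : N - 1 - (i : ℕ) < N - 1 - (i' : ℕ) := by
        have := i.isLt; omega
      simp [hT, h2, Nat.choose_eq_zero_of_lt h3, mt Fin.val_eq_zero_iff.mpr h2]
  -- the update of B with row 0 shifted
  set Bu : Matrix (Fin N) (Fin N) F :=
    B.updateRow 0 (fun j => (p (k + (N - 1))).eval (x j + u)) with hBu
  -- factorization of the left-hand matrix
  have hfac : (Matrix.of fun i j : Fin N =>
      (p ((if (i : ℕ) = 0 then k else 0) + (N - 1 - (i : ℕ)))).eval (x j + u)) = T * Bu := by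
    ext i j
    rw [Matrix.mul_apply]
    by_cases h : i = 0
    · subst h
      rw [Finset.sum_eq_single (0 : Fin N)]
      · simp [hT, hBu, Matrix.updateRow_self]
      · intro b _ hb
        have hb' : (b : ℕ) ≠ 0 := fun hc => hb (Fin.ext hc)
        simp [hT, hb', hb]
      · simp
    · have h' : (i : ℕ) ≠ 0 := fun hc => h (Fin.ext hc)
      -- each summand as a function of the natural index
      have hterm : ∀ i' : Fin N, T i i' * Bu i' j =
          (fun t : ℕ => (((N - 1 - (i : ℕ)).choose (N - 1 - t) : ℕ) : F)
            * (p (t - (i : ℕ))).eval u *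
            (if t = 0 then (p (k + (N - 1))).eval (x j + u) else (p (N - 1 - t)).eval (x j)))
          (i' : ℕ) := by
        intro i'
        by_cases h2 : i' = 0
        · subst h2
          simp [hT, hBu, h', h, Matrix.updateRow_self]
        · have h2' : (i' : ℕ) ≠ 0 := fun hc => h2 (Fin.ext hc)
          simp [hT, hBu, hB, h', h2', h, h2, Matrix.updateRow_ne h2]
      have hizero : (((N - 1 - (i : ℕ)).choose (N - 1) : ℕ) : F) = 0 := by
        rw [Nat.choose_eq_zero_of_lt (by have := i.isLt; omega)]
        simp
      calc (p ((if (i : ℕ) = 0 then k else 0) + (N - 1 - (i : ℕ)))).eval (x j + u)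
          = (p (N - 1 - (i : ℕ))).eval (x j + u) := by rw [if_neg h', zero_add]
        _ = ∑ s ∈ Finset.range (N - 1 - (i : ℕ) + 1),
              (((N - 1 - (i : ℕ)).choose s : ℕ) : F) * (p s).eval (x j)
                * (p (N - 1 - (i : ℕ) - s)).eval u := hbin _ _ _
        _ = ∑ s ∈ Finset.range N,
              (((N - 1 - (i : ℕ)).choose s : ℕ) : F) * (p s).eval (x j)
                * (p (N - 1 - (i : ℕ) - s)).eval u := by
            apply Finset.sum_subset
            · intro t ht
              simp only [Finset.mem_range] at *
              have := i.isLt; omega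
            · intro t _ ht
              simp only [Finset.mem_range, not_lt] at ht
              rw [Nat.choose_eq_zero_of_lt (by omega)]
              simp
        _ = ∑ t ∈ Finset.range N,
              (((N - 1 - (i : ℕ)).choose (N - 1 - t) : ℕ) : F)
                * (p (t - (i : ℕ))).eval u * (p (N - 1 - t)).eval (x j) := by
            rw [← Finset.sum_range_reflect (fun t =>
              (((N - 1 - (i : ℕ)).choose (N - 1 - t) : ℕ) : F)
                * (p (t - (i : ℕ))).eval u * (p (N - 1 - t)).eval (x j)) N]
            apply Finset.sum_congr rfl
            intro s hs
            simp only [Finset.mem_range] at hs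
            have e1 : N - 1 - (N - 1 - s) = s := by omega
            have e2 : N - 1 - s - (i : ℕ) = N - 1 - (i : ℕ) - s := by omega
            rw [e1, e2]
            ring
        _ = ∑ t ∈ Finset.range N,
              (fun t : ℕ => (((N - 1 - (i : ℕ)).choose (N - 1 - t) : ℕ) : F)
                * (p (t - (i : ℕ))).eval u *
                (if t = 0 then (p (k + (N - 1))).eval (x j + u) else (p (N - 1 - t)).eval (x j)))
              t := by
            apply Finset.sum_congr rfl
            intro t _
            by_cases h3 : t = 0
            · subst h3
              simp only [Nat.sub_zero, if_pos rfl]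
              rw [hizero]; ring
            · simp [h3]
        _ = ∑ i' : Fin N, T i i' * Bu i' j := by
            rw [← Fin.sum_univ_eq_sum_range (fun t : ℕ =>
              (((N - 1 - (i : ℕ)).choose (N - 1 - t) : ℕ) : F)
                * (p (t - (i : ℕ))).eval u *
                (if t = 0 then (p (k + (N - 1))).eval (x j + u)
                  else (p (N - 1 - t)).eval (x j))) N]
            exact Finset.sum_congr rfl fun i' _ => (hterm i').symm
  rw [hfac, Matrix.det_mul, hTdet, one_mul]
  -- expand row 0 using the binomial identity
  have hrow : (fun j => (p (k + (N - 1))).eval (x j + u)) =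
      ∑ r ∈ Finset.range (k + (N - 1) + 1),
        (fun j => ((k + (N - 1)).choose r : F) * (p r).eval (x j)
          * (p (k + (N - 1) - r)).eval u) := by
    funext j
    rw [Finset.sum_apply]
    exact hbin _ _ _
  rw [hBu, hrow, det_updateRow_sum'' B 0]
  -- pull the scalar factors out of each determinant
  have hpull : ∀ r : ℕ,
      (B.updateRow 0 (fun j => ((k + (N - 1)).choose r : F) * (p r).eval (x j)
        * (p (k + (N - 1) - r)).eval u)).det
      = ((k + (N - 1)).choose r : F) * (p (k + (N - 1) - r)).eval u
        * (B.updateRow 0 (fun j => (p r).eval (x j))).det := by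
    intro r
    have hs : (fun j => ((k + (N - 1)).choose r : F) * (p r).eval (x j)
        * (p (k + (N - 1) - r)).eval u)
        = (((k + (N - 1)).choose r : F) * (p (k + (N - 1) - r)).eval u)
          • (fun j => (p r).eval (x j)) := by
      funext j
      simp [smul_eq_mul]
      ring
    rw [hs, Matrix.det_updateRow_smul]
  rw [Finset.sum_congr rfl fun r _ => hpull r]
  have hsplit : k + (N - 1) + 1 = (N - 1) + (k + 1) := by omega
  rw [hsplit, Finset.sum_range_add]
  -- the first block of terms vanishes (repeated rows)
  have hzero : ∀ r ∈ Finset.range (N - 1),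
      ((k + (N - 1)).choose r : F) * (p (k + (N - 1) - r)).eval u
        * (B.updateRow 0 (fun j => (p r).eval (x j))).det = 0 := by
    intro r hr
    simp only [Finset.mem_range] at hr
    have hi : N - 1 - r < N := by omega
    have hne : (0 : Fin N) ≠ ⟨N - 1 - r, hi⟩ := by
      intro hc
      have := congrArg (Fin.val) hc
      simp at this
      omega
    have hdet0 : (B.updateRow 0 (fun j => (p r).eval (x j))).det = 0 := by
      apply Matrix.det_zero_of_row_eq hne
      rw [Matrix.updateRow_self, Matrix.updateRow_ne hne.symm]
      funext j
      have e : N - 1 - (N - 1 - r) = r := by omega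
      simp [hB, e]
    rw [hdet0, mul_zero]
  rw [Finset.sum_eq_zero hzero, zero_add]
  -- the remaining terms give the right-hand side
  apply Finset.sum_congr rfl
  intro l hl
  simp only [Finset.mem_range] at hl
  have hl' : l ≤ k := by omega
  have e1 : k + (N - 1) - (N - 1 + l) = k - l := by omega
  have e2 : (k + (N - 1)).choose (N - 1 + l) = (N + k - 1).choose (k - l) := by
    have h1 : k + (N - 1) = N + k - 1 := by omega
    have h3 : N - 1 + l ≤ N + k - 1 := by omega
    rw [h1, ← Nat.choose_symm h3]
    congr 1
    omega
  have e3 : N - 1 + l = l + (N - 1) := by omega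
  rw [e1, e2, e3, hmat l]
  ring
end

section
/- Let {p_n} be a monic polynomial sequence of binomial type over a characteristic-zero field, and for a partition \lambda with at most N parts set \tilde{s}_\lambda(x_1,...,x_N) = \det(p_{\lambda_i+N-i}(x_j))_{i,j}. Then \tilde{s}_\lambda(x_1+u,...,x_N+u) = \sum_{\mu \subseteq \lambda} d_{\lambda\mu}(u) \tilde{s}_\mu(x_1,...,x_N), where the sum is over partitions \mu with \mu_i \leq \lambda_i for all i, and d_{\lambda\mu}(u) = \det( \binom{\lambda_i + N - i}{\lambda_i - \mu_j - i + j} p_{\lambda_i - \mu_j - i + j}(u) )_{1\leq i,j\leq N}, with the conventions \binom{m}{r} = 0 and p_r = 0 for r < 0. -/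
open Finset

/-- Determinant vanishes if there is a zero corner block of total size exceeding `N`. -/
lemma det_zero_of_corner_block {F : Type*} [Field F] {N : ℕ} (A : Matrix (Fin N) (Fin N) F)
    (t : Fin N) (h : ∀ i j : Fin N, t ≤ i → j ≤ t → A i j = 0) : A.det = 0 := by
  rw [Matrix.det_apply]
  refine Finset.sum_eq_zero fun σ _ => ?_
  suffices h' : ∃ j, A (σ j) j = 0 by
    obtain ⟨j, hj⟩ := h'
    have : ∏ i, A (σ i) i = 0 := Finset.prod_eq_zero (Finset.mem_univ j) hj
    rw [this, smul_zero]
  by_contra hc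
  push_neg at hc
  have hmaps : ∀ j ∈ Finset.Iic t, σ j ∈ Finset.Iio t := by
    intro j hj
    simp only [Finset.mem_Iic] at hj
    simp only [Finset.mem_Iio]
    by_contra hlt
    exact hc j (h (σ j) j (not_lt.mp hlt) hj)
  have hcard := Finset.card_le_card_of_injOn σ hmaps (σ.injective.injOn)
  rw [Fin.card_Iic, Fin.card_Iio] at hcard
  omega

/-- A strictly antitone function `Fin N → ℕ` satisfies `N - 1 - i ≤ g i`. -/
lemma strictAnti_ge {N : ℕ} {g : Fin N → ℕ} (hg : StrictAnti g) (i : Fin N) :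
    N - 1 - (i : ℕ) ≤ g i := by
  have key : ∀ (v : ℕ) (k : Fin N), (N : ℕ) - 1 - (k : ℕ) = v → v ≤ g k := by
    intro v
    induction v with
    | zero => intro k _; exact Nat.zero_le _
    | succ w ih =>
      intro k hk
      have hk' : (k : ℕ) + 1 < N := by omega
      have hlt : k < (⟨(k : ℕ) + 1, hk'⟩ : Fin N) := by
        simp [Fin.lt_def]
      have h1 := hg hlt
      have h2 := ih ⟨(k : ℕ) + 1, hk'⟩ (by simp; omega)
      omega
  exact key _ i rfl

/-- A strictly antitone function `Fin N → ℕ` satisfies `g j + (j - i) ≤ g i` for `i ≤ j`. -/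
lemma strictAnti_sub_le {N : ℕ} {g : Fin N → ℕ} (hg : StrictAnti g) (i j : Fin N)
    (hij : i ≤ j) : g j + ((j : ℕ) - (i : ℕ)) ≤ g i := by
  have key : ∀ (v : ℕ) (i j : Fin N), i ≤ j → (j : ℕ) - (i : ℕ) = v →
      g j + ((j : ℕ) - (i : ℕ)) ≤ g i := by
    intro v
    induction v with
    | zero =>
      intro i j hij hv
      have hij' : (i : ℕ) ≤ (j : ℕ) := hij
      have : i = j := Fin.ext (by omega)
      subst this
      omega
    | succ w ih =>
      intro i j hij hv
      have hij' : (i : ℕ) ≤ (j : ℕ) := hij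
      have hi' : (i : ℕ) + 1 < N := by have := j.isLt; omega
      have h1 : g ⟨(i : ℕ) + 1, hi'⟩ < g i := hg (by simp [Fin.lt_def])
      have h2 := ih ⟨(i : ℕ) + 1, hi'⟩ j (by simp [Fin.le_def]; omega) (by simp; omega)
      simp at h2
      omega
  exact key _ i j hij rfl

/-- Cauchy–Binet style expansion indexed by strictly decreasing sequences. -/
lemma cauchy_binet_aux {F : Type*} [Field F] {N Mn : ℕ} (B : Fin N → ℕ → F)
    (C : ℕ → Fin N → F) :
    (Matrix.of fun i j : Fin N => ∑ k ∈ range Mn, B i k * C k j).det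
      = ∑ g ∈ (Fintype.piFinset fun _ : Fin N => range Mn).filter (fun g => StrictAnti g),
          (Matrix.of fun i j : Fin N => B i (g j)).det
            * (Matrix.of fun i j : Fin N => C (g i) j).det := by
  classical
  -- Step 1: multilinear expansion of the determinant in the rows
  have h1 : (Matrix.of fun i j : Fin N => ∑ k ∈ range Mn, B i k * C k j).det
      = ∑ r ∈ Fintype.piFinset (fun _ : Fin N => range Mn),
          (∏ i, B i (r i)) * (Matrix.of fun i j : Fin N => C (r i) j).det := by
    have e1 : (Matrix.of fun i j : Fin N => ∑ k ∈ range Mn, B i k * C k j)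
        = Matrix.of (fun i => ∑ k ∈ range Mn, B i k • C k) := by
      funext i j
      simp [Finset.sum_apply]
    rw [e1]
    have e2 : (Matrix.of (fun i => ∑ k ∈ range Mn, B i k • C k)).det
        = (Matrix.detRowAlternating : (Fin N → F) [⋀^Fin N]→ₗ[F] F).toMultilinearMap
            (fun i => ∑ k ∈ range Mn, B i k • C k) := rfl
    rw [e2, MultilinearMap.map_sum_finset]
    refine Finset.sum_congr rfl fun r _ => ?_
    have e3 := (Matrix.detRowAlternating :
        (Fin N → F) [⋀^Fin N]→ₗ[F] F).toMultilinearMap.map_smul_univ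
        (fun i => B i (r i)) (fun i => C (r i))
    simp only [e3, smul_eq_mul]
    rfl
  rw [h1]
  -- Step 2: restrict to injective maps
  rw [← Finset.sum_filter_of_ne (p := fun r : Fin N → ℕ => Function.Injective r)
    (by
      intro r _ hne
      by_contra hni
      apply hne
      have h4 : ¬ Function.Injective (fun i => C (r i)) := by
        simp only [Function.Injective, not_forall] at hni ⊢
        obtain ⟨a, b, hab, hne'⟩ := hni
        exact ⟨a, b, by rw [hab], hne'⟩
      have h5 := (Matrix.detRowAlternating :
          (Fin N → F) [⋀^Fin N]→ₗ[F] F).map_eq_zero_of_not_injective _ h4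
      have hz : (Matrix.of fun i j : Fin N => C (r i) j).det = 0 := h5
      rw [hz, mul_zero])]
  -- Step 3: bijection with pairs (g, σ)
  have h3 : ∑ r ∈ (Fintype.piFinset fun _ : Fin N => range Mn).filter
        (fun r => Function.Injective r),
        (∏ i, B i (r i)) * (Matrix.of fun i j : Fin N => C (r i) j).det
      = ∑ gp ∈ ((Fintype.piFinset fun _ : Fin N => range Mn).filter
            (fun g => StrictAnti g)) ×ˢ (Finset.univ : Finset (Equiv.Perm (Fin N))),
          (∏ i, B i (gp.1 (gp.2 i)))
            * (Matrix.of fun i j : Fin N => C (gp.1 (gp.2 i)) j).det := by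
    refine (Finset.sum_bij (fun gp _ => gp.1 ∘ gp.2) ?_ ?_ ?_ ?_).symm
    · rintro ⟨g, σ⟩ hgp
      simp only [Finset.mem_product, Finset.mem_filter, Fintype.mem_piFinset,
        Finset.mem_univ, and_true] at hgp
      simp only [Finset.mem_filter, Fintype.mem_piFinset]
      exact ⟨fun i => hgp.1 _, hgp.2.injective.comp σ.injective⟩
    · rintro ⟨g₁, σ₁⟩ h₁ ⟨g₂, σ₂⟩ h₂ heq
      simp only [Finset.mem_product, Finset.mem_filter, Fintype.mem_piFinset,
        Finset.mem_univ, and_true] at h₁ h₂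
      have heq' : g₁ ∘ ⇑σ₁ = g₂ ∘ ⇑σ₂ := heq
      have hrange : Set.range g₁ = Set.range g₂ := by
        have e1 : Set.range (g₁ ∘ ⇑σ₁) = Set.range g₁ := σ₁.surjective.range_comp g₁
        have e2 : Set.range (g₂ ∘ ⇑σ₂) = Set.range g₂ := σ₂.surjective.range_comp g₂
        rw [← e1, ← e2, heq']
      have hg : g₁ = g₂ := (h₁.2.range_inj h₂.2).mp hrange
      subst hg
      have hσ : σ₁ = σ₂ := by
        ext i
        exact congrArg Fin.val (h₁.2.injective (congrFun heq' i))
      rw [hσ]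
    · intro f hf
      simp only [Finset.mem_filter, Fintype.mem_piFinset] at hf
      obtain ⟨hfm, hfinj⟩ := hf
      have hcard : (Finset.image f Finset.univ).card = N := by
        rw [Finset.card_image_of_injective _ hfinj, Finset.card_univ, Fintype.card_fin]
      set s : Finset ℕ := Finset.image f Finset.univ with hs
      set e := s.orderIsoOfFin hcard with he
      set g : Fin N → ℕ := fun i => (e i.rev : ℕ) with hg
      have hganti : StrictAnti g := by
        intro a b hab
        have hrev : b.rev < a.rev := by rwa [Fin.rev_lt_rev]
        exact_mod_cast e.strictMono hrev
      have hmem : ∀ i, f i ∈ s := fun i => Finset.mem_image_of_mem f (Finset.mem_univ i)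
      set τ : Fin N → Fin N := fun i => (e.symm ⟨f i, hmem i⟩).rev with hτ
      have hτinj : Function.Injective τ := by
        intro a b hab
        have h1 := Fin.rev_injective hab
        have h2 := e.symm.injective h1
        exact hfinj (by simpa using congrArg Subtype.val h2)
      have hτbij := Finite.injective_iff_bijective.mp hτinj
      refine ⟨⟨g, Equiv.ofBijective τ hτbij⟩, ?_, ?_⟩
      · simp only [Finset.mem_product, Finset.mem_filter, Fintype.mem_piFinset,
          Finset.mem_univ, and_true]
        refine ⟨fun i => ?_, hganti⟩
        have h6 : ((e i.rev : ℕ)) ∈ s := (e i.rev).2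
        obtain ⟨k, _, hk⟩ := Finset.mem_image.mp h6
        show (e i.rev : ℕ) ∈ range Mn
        rw [← hk]
        exact hfm k
      · funext i
        show g (τ i) = f i
        rw [hg, hτ]
        simp [Fin.rev_rev]
    · rintro ⟨g, σ⟩ hgp
      rfl
  rw [h3, Finset.sum_product]
  refine Finset.sum_congr rfl fun g hg => ?_
  have hganti : StrictAnti g := (Finset.mem_filter.mp hg).2
  -- Step 4: inner sum over permutations
  have hperm : ∀ σ : Equiv.Perm (Fin N),
      (Matrix.of fun i j : Fin N => C (g (σ i)) j).det
        = ((Equiv.Perm.sign σ : ℤ) : F) * (Matrix.of fun i j : Fin N => C (g i) j).det := by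
    intro σ
    have hdp := Matrix.det_permute σ (Matrix.of fun i j : Fin N => C (g i) j)
    have : ((Matrix.of fun i j : Fin N => C (g i) j).submatrix σ id)
        = Matrix.of fun i j : Fin N => C (g (σ i)) j := rfl
    rw [this] at hdp
    rw [hdp]
  have key : ∀ σ : Equiv.Perm (Fin N),
      (∏ i, B i (g (σ i))) * (Matrix.of fun i j : Fin N => C (g (σ i)) j).det
      = (((Equiv.Perm.sign σ⁻¹ : ℤ) : F) * ∏ i, B (σ⁻¹ i) (g i))
          * (Matrix.of fun i j : Fin N => C (g i) j).det := by
    intro σ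
    rw [hperm σ, Equiv.Perm.sign_inv]
    have hprod : (∏ i, B i (g (σ i))) = ∏ i, B (σ⁻¹ i) (g i) := by
      rw [← Equiv.prod_comp σ (fun i => B (σ⁻¹ i) (g i))]
      simp
    rw [hprod]
    ring
  simp only [key]
  rw [← Finset.sum_mul]
  congr 1
  rw [Matrix.det_apply']
  have := Equiv.sum_comp (Equiv.inv (Equiv.Perm (Fin N)))
    (fun σ => ((Equiv.Perm.sign σ : ℤ) : F) * ∏ i, B (σ i) (g i))
  simp only [Equiv.inv_apply] at this
  rw [this]
  rfl

/-- Expansion of the Schur-type determinant for a monic binomial-type sequence: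
`s̃_λ(x₁+u, …, x_N+u) = ∑_{μ ⊆ λ} d_{λμ}(u) s̃_μ(x₁,…,x_N)`, where `μ` runs over partitions
with `μᵢ ≤ λᵢ` (encoded as antitone elements of `Π i, Fin (λᵢ + 1)`) and
`d_{λμ}(u) = det( C(λᵢ+N-i, λᵢ-μⱼ-i+j) p_{λᵢ-μⱼ-i+j}(u) )`, with the conventions
`C(m,r) = 0` and `p_r = 0` for `r < 0`. -/
theorem expansion_of_s {F : Type*} [Field F] [CharZero F] (N : ℕ) (p : ℕ → Polynomial F)
    (hmonic : ∀ n, (p n).Monic) (hdeg : ∀ n, (p n).natDegree = n)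
    (hbin : ∀ (n : ℕ) (a b : F), (p n).eval (a + b) =
      ∑ j ∈ Finset.range (n + 1), (n.choose j : F) * (p j).eval a * (p (n - j)).eval b)
    (h0 : ∀ n : ℕ, (p n).eval 0 = if n = 0 then 1 else 0)
    (lam : Fin N → ℕ) (hanti : ∀ i j : Fin N, i ≤ j → lam j ≤ lam i)
    (x : Fin N → F) (u : F) :
    (Matrix.of fun i j : Fin N => (p (lam i + (N - 1 - (i : ℕ)))).eval (x j + u)).det =
      ∑ m ∈ Finset.univ.filter
          (fun m : (i : Fin N) → Fin (lam i + 1) =>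
            ∀ i j : Fin N, i ≤ j → ((m j : ℕ) ≤ (m i : ℕ))),
        (Matrix.of fun i j : Fin N =>
          if ((lam i : ℤ) - ((m j : ℕ) : ℤ) - (i : ℕ) + (j : ℕ)) < 0 then 0
          else ((lam i + (N - 1 - (i : ℕ))).choose
                  ((lam i : ℤ) - ((m j : ℕ) : ℤ) - (i : ℕ) + (j : ℕ)).toNat : F) *
            (p ((lam i : ℤ) - ((m j : ℕ) : ℤ) - (i : ℕ) + (j : ℕ)).toNat).eval u).det *
        (Matrix.of fun i j : Fin N => (p ((m i : ℕ) + (N - 1 - (i : ℕ)))).eval (x j)).det := by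
  classical
  set L : Fin N → ℕ := fun i => lam i + (N - 1 - (i : ℕ)) with hL
  set Mn : ℕ := (Finset.univ.sup L) + 1 with hMn
  set B : Fin N → ℕ → F := fun i k => ((L i).choose k : F) * (p (L i - k)).eval u with hB
  set C : ℕ → Fin N → F := fun k j => (p k).eval (x j) with hC
  have hLlt : ∀ i, L i < Mn := fun i => Nat.lt_succ_of_le (Finset.le_sup (Finset.mem_univ i))
  have hLanti : ∀ i j : Fin N, i ≤ j → L j ≤ L i := by
    intro i j hij
    have h1 := hanti i j hij
    have hij' : (i : ℕ) ≤ (j : ℕ) := hij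
    have := j.isLt
    simp only [hL]
    omega
  have hrow : ∀ i j : Fin N, (p (L i)).eval (x j + u) = ∑ k ∈ range Mn, B i k * C k j := by
    intro i j
    rw [hbin (L i) (x j) u]
    rw [Finset.sum_subset (Finset.range_subset_range.mpr (hLlt i)) (by
      intro k _ hk2
      simp only [Finset.mem_range, not_lt] at hk2
      rw [Nat.choose_eq_zero_of_lt (by omega), Nat.cast_zero, zero_mul, zero_mul])]
    exact Finset.sum_congr rfl fun k _ => by rw [hB, hC]; ring
  have hLHS : (Matrix.of fun i j : Fin N => (p (lam i + (N - 1 - (i : ℕ)))).eval (x j + u))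
      = Matrix.of fun i j : Fin N => ∑ k ∈ range Mn, B i k * C k j := by
    funext i j
    exact hrow i j
  rw [hLHS, cauchy_binet_aux]
  -- restrict to g ≤ L
  rw [← Finset.sum_filter_of_ne (p := fun g : Fin N → ℕ => ∀ i, g i ≤ L i) (by
    intro g hg hne
    by_contra hnot
    push_neg at hnot
    obtain ⟨t, ht⟩ := hnot
    apply hne
    have hganti : StrictAnti g := (Finset.mem_filter.mp hg).2
    have hzero : (Matrix.of fun i j : Fin N => B i (g j)).det = 0 := by
      apply det_zero_of_corner_block _ t
      intro i j hti hjt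
      have h1 : g t ≤ g j := hganti.antitone hjt
      have h2 : L i ≤ L t := hLanti t i hti
      show ((L i).choose (g j) : F) * (p (L i - g j)).eval u = 0
      rw [Nat.choose_eq_zero_of_lt (by omega), Nat.cast_zero, zero_mul]
    rw [hzero, zero_mul])]
  -- final bijection with partitions μ ⊆ λ
  refine (Finset.sum_bij (fun (m : (i : Fin N) → Fin (lam i + 1)) _ =>
      (fun i : Fin N => (m i : ℕ) + (N - 1 - (i : ℕ)))) ?_ ?_ ?_ ?_).symm
  · intro m hm
    simp only [Finset.mem_filter, Finset.mem_univ, true_and] at hm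
    have hmanti : StrictAnti (fun i : Fin N => (m i : ℕ) + (N - 1 - (i : ℕ))) := by
      intro a b hab
      have h1 := hm a b (le_of_lt hab)
      have hab' : (a : ℕ) < (b : ℕ) := hab
      have := b.isLt
      show (m b : ℕ) + (N - 1 - (b : ℕ)) < (m a : ℕ) + (N - 1 - (a : ℕ))
      omega
    simp only [Finset.mem_filter, Fintype.mem_piFinset, Finset.mem_range]
    refine ⟨⟨fun i => ?_, hmanti⟩, fun i => ?_⟩
    · have h2 := (m i).isLt
      have h3 := hLlt i
      have hLi : L i = lam i + (N - 1 - (i : ℕ)) := rfl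
      show (m i : ℕ) + (N - 1 - (i : ℕ)) < Mn
      omega
    · have h2 := (m i).isLt
      have hLi : L i = lam i + (N - 1 - (i : ℕ)) := rfl
      show (m i : ℕ) + (N - 1 - (i : ℕ)) ≤ L i
      omega
  · intro m₁ h₁ m₂ h₂ heq
    funext i
    have hval : (m₁ i : ℕ) + (N - 1 - (i : ℕ)) = (m₂ i : ℕ) + (N - 1 - (i : ℕ)) :=
      congrFun heq i
    exact Fin.ext (by omega)
  · intro g hg
    simp only [Finset.mem_filter, Fintype.mem_piFinset, Finset.mem_range] at hg
    obtain ⟨⟨hgm, hganti⟩, hgle⟩ := hg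
    have hge : ∀ i : Fin N, N - 1 - (i : ℕ) ≤ g i := strictAnti_ge hganti
    have hgleL : ∀ i, g i ≤ lam i + (N - 1 - (i : ℕ)) := by
      intro i
      have := hgle i
      simpa [hL] using this
    refine ⟨fun i => ⟨g i - (N - 1 - (i : ℕ)), by have := hgleL i; have := hge i; omega⟩,
        ?_, ?_⟩
    · simp only [Finset.mem_filter, Finset.mem_univ, true_and]
      intro i j hij
      have h1 := strictAnti_sub_le hganti i j hij
      have h2 := hge j
      have h3 := hge i
      have hij' : (i : ℕ) ≤ (j : ℕ) := hij
      have := j.isLt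
      show g j - (N - 1 - (j : ℕ)) ≤ g i - (N - 1 - (i : ℕ))
      omega
    · funext i
      have := hge i
      show g i - (N - 1 - (i : ℕ)) + (N - 1 - (i : ℕ)) = g i
      omega
  · intro m hm
    simp only [Finset.mem_filter, Finset.mem_univ, true_and] at hm
    congr 1
    · congr 1
      funext i j
      have hi := i.isLt
      have hj := j.isLt
      have hmj := (m j).isLt
      simp only [Matrix.of_apply, hB]
      split_ifs with hz
      · have hlt : L i < (m j : ℕ) + (N - 1 - (j : ℕ)) := by
          simp only [hL]
          omega
        rw [Nat.choose_eq_zero_of_lt hlt, Nat.cast_zero, zero_mul]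
      · push_neg at hz
        have htn : ((lam i : ℤ) - ((m j : ℕ) : ℤ) - (i : ℕ) + (j : ℕ)).toNat
            = L i - ((m j : ℕ) + (N - 1 - (j : ℕ))) := by
          simp only [hL]
          omega
        have hle : (m j : ℕ) + (N - 1 - (j : ℕ)) ≤ L i := by
          simp only [hL]
          omega
        rw [htn, Nat.choose_symm hle]
end
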